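/- arXiv:1111.6924 — 4 statements merged into one kernel-verified Lean document; each statement's English description precedes it below -/
import Mathlib

section
/- Let (Λ₀, Λ) be a relative category of paths and α ∈ Λ₀. For each vertex v of Λ₀ let X_v denote the set of ultrafilters in 𝒜(Λ₀,Λ)_v, equipped with the topology generated by the sets Ê = {𝒰 ∈ X_v : E ∈ 𝒰} for E ∈ 𝒜(Λ₀,Λ)_v. Then there is a well-defined map α̂ : X_{s(α)} → X_{r(α)} sending an ultrafilter 𝒰 to the ultrafilter generated by the ultrafilter base {αE : E ∈ 𝒰}; the map α̂ is injective and continuous; and an ultrafilter 𝒱 ∈ X_{r(α)} lies in the range of α̂ if and only if αΛ ∈ 𝒱. -/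
universe u v

/-- A category of paths: a small category (objects identified with identity
morphisms) with left and right cancellation and no inverses. -/
structure CategoryOfPaths (Λ : Type u) where
  s : Λ → Λ
  r : Λ → Λ
  comp : Λ → Λ → Λ
  s_comp : ∀ {α β : Λ}, s α = r β → s (comp α β) = s β
  r_comp : ∀ {α β : Λ}, s α = r β → r (comp α β) = r α
  comp_assoc : ∀ {α β γ : Λ}, s α = r β → s β = r γ →
    comp (comp α β) γ = comp α (comp β γ)
  id_comp : ∀ α : Λ, comp (r α) α = α
  comp_id : ∀ α : Λ, comp α (s α) = α
  s_r : ∀ α : Λ, s (r α) = r α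
  r_r : ∀ α : Λ, r (r α) = r α
  r_s : ∀ α : Λ, r (s α) = s α
  s_s : ∀ α : Λ, s (s α) = s α
  left_cancel : ∀ {α β γ : Λ}, s α = r β → s α = r γ → comp α β = comp α γ → β = γ
  right_cancel : ∀ {β γ α : Λ}, s β = r α → s γ = r α → comp β α = comp γ α → β = γ
  no_inverses : ∀ {α β : Λ}, s α = r β → comp α β = s β → α = s β ∧ β = s β

variable {Λ : Type u}

/-- The tail set `αΛ`. -/
def pTail (C : CategoryOfPaths Λ) (α : Λ) : Set Λ :=
  {x | ∃ β, C.s α = C.r β ∧ x = C.comp α β}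

/-- `vΛ`, the paths with range `v`. -/
def pRng (C : CategoryOfPaths Λ) (w : Λ) : Set Λ := {α | C.r α = w}

/-- `Λv`, the paths with source `v`. -/
def pSrc (C : CategoryOfPaths Λ) (w : Λ) : Set Λ := {α | C.s α = w}

/-- `[β]`, the initial segments of `β`. -/
def pSeg (C : CategoryOfPaths Λ) (β : Λ) : Set Λ := {α | β ∈ pTail C α}

/-- `α ⋔ β`. -/
def pMeets (C : CategoryOfPaths Λ) (α β : Λ) : Prop :=
  (pTail C α ∩ pTail C β).Nonempty

/-- `αE`. -/
def pMulSet (C : CategoryOfPaths Λ) (α : Λ) (E : Set Λ) : Set Λ :=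
  {x | ∃ β ∈ E, C.s α = C.r β ∧ x = C.comp α β}

/-- `σ^α(E ∩ αΛ)`, computed inside an ambient subcategory `S`. -/
def pShiftIn (C : CategoryOfPaths Λ) (S : Set Λ) (α : Λ) (E : Set Λ) : Set Λ :=
  {β | β ∈ S ∧ C.s α = C.r β ∧ C.comp α β ∈ E}

/-- `σ^α(E ∩ αΛ)`. -/
def pShift (C : CategoryOfPaths Λ) (α : Λ) (E : Set Λ) : Set Λ :=
  {β | C.s α = C.r β ∧ C.comp α β ∈ E}

/-- `⋁F`: the minimal common extensions of `F`. -/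
def pMinExt (C : CategoryOfPaths Λ) (F : Set Λ) : Set Λ :=
  {ε | (∀ α ∈ F, ε ∈ pTail C α) ∧
    ∀ γ, (∀ α ∈ F, γ ∈ pTail C α) → ε ∈ pTail C γ → γ = ε}

/-- `α ∨ β`: the minimal common extensions of `α` and `β`. -/
def pMinCE (C : CategoryOfPaths Λ) (α β : Λ) : Set Λ := pMinExt C {α, β}

/-- A subcategory of a category of paths, as a set of morphisms. -/
structure IsSubcategory (C : CategoryOfPaths Λ) (Λ₀ : Set Λ) : Prop where
  comp_mem : ∀ {α β : Λ}, α ∈ Λ₀ → β ∈ Λ₀ → C.s α = C.r β → C.comp α β ∈ Λ₀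
  s_mem : ∀ {α : Λ}, α ∈ Λ₀ → C.s α ∈ Λ₀
  r_mem : ∀ {α : Λ}, α ∈ Λ₀ → C.r α ∈ Λ₀

/-- A finitely aligned category of paths. -/
def FinitelyAligned (C : CategoryOfPaths Λ) : Prop :=
  ∀ α β : Λ, ∃ G : Set Λ, G.Finite ∧
    pTail C α ∩ pTail C β = ⋃ ε ∈ G, pTail C ε

/-- A finitely aligned relative category of paths `(Λ₀, Λ)`. -/
def RelFinitelyAligned (C : CategoryOfPaths Λ) (Λ₀ : Set Λ) : Prop :=
  (∀ α ∈ Λ₀, ∀ β ∈ Λ₀, ∃ G : Set Λ, G.Finite ∧ G ⊆ Λ₀ ∧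
      pTail C α ∩ pTail C β = ⋃ ε ∈ G, pTail C ε) ∧
  (∀ α ∈ Λ₀, pTail C α ∩ Λ₀ = pMulSet C α Λ₀)

/-- A ring of sets: contains `∅` and is closed under `∪`, `∩`, and `\`. -/
def IsSetRing {γ : Type v} (R : Set (Set γ)) : Prop :=
  ∅ ∈ R ∧ (∀ E ∈ R, ∀ F ∈ R, E ∪ F ∈ R) ∧ (∀ E ∈ R, ∀ F ∈ R, E ∩ F ∈ R) ∧
    (∀ E ∈ R, ∀ F ∈ R, E \ F ∈ R)

/-- A ring of sets on `S`: a ring of sets all of whose members are subsets of `S`. -/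
def IsSetRingOn {γ : Type v} (S : Set γ) (R : Set (Set γ)) : Prop :=
  IsSetRing R ∧ ∀ E ∈ R, E ⊆ S

/-- The ring of sets generated by a collection. -/
def setRingGen {γ : Type v} (G : Set (Set γ)) : Set (Set γ) :=
  ⋂₀ {R | IsSetRing R ∧ G ⊆ R}

/-- The ring of sets on `S` generated by a collection. -/
def setRingGenOn {γ : Type v} (S : Set γ) (G : Set (Set γ)) : Set (Set γ) :=
  ⋂₀ {R | IsSetRingOn S R ∧ G ⊆ R}

/-- A zigzag: a list of pairs `(αᵢ, βᵢ)` with `r αᵢ = r βᵢ` and `s αᵢ₊₁ = s βᵢ`. -/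
def IsZigzag (C : CategoryOfPaths Λ) (l : List (Λ × Λ)) : Prop :=
  (∀ p ∈ l, C.r p.1 = C.r p.2) ∧ l.Chain' (fun p q => C.s q.1 = C.s p.2)

/-- The (graph of the) zigzag map `φ_ζ = σ^{α₁} β₁ ⋯ σ^{αₙ} βₙ`, computed
inside an ambient subcategory `S`. -/
def zigzagRelIn (C : CategoryOfPaths Λ) (S : Set Λ) : List (Λ × Λ) → Λ → Λ → Prop
  | [], x, y => x = y ∧ x ∈ S
  | p :: rest, x, y => ∃ z, zigzagRelIn C S rest x z ∧ C.s p.2 = C.r z ∧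
      C.s p.1 = C.r y ∧ y ∈ S ∧ C.comp p.2 z = C.comp p.1 y

/-- `A(ζ)`: the domain of the zigzag map. -/
def zigzagDomIn (C : CategoryOfPaths Λ) (S : Set Λ) (l : List (Λ × Λ)) : Set Λ :=
  {x | ∃ y, zigzagRelIn C S l x y}

/-- `𝒟(Λ₀,Λ)⁰_v`: nonempty zigzag sets with entries in `Λ₀` and source `v`,
computed inside the ambient subcategory `S`. -/
def relD0 (C : CategoryOfPaths Λ) (Λ₀ S : Set Λ) (w : Λ) : Set (Set Λ) :=
  {E | E.Nonempty ∧ ∃ (l : List (Λ × Λ)) (h : l ≠ []),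
    IsZigzag C l ∧ (∀ p ∈ l, p.1 ∈ Λ₀ ∧ p.2 ∈ Λ₀) ∧
    C.s (l.getLast h).2 = w ∧ E = zigzagDomIn C S l}

/-- `𝒜(Λ₀,Λ)_v`: the ring of sets generated by the zigzag sets. -/
def relAring (C : CategoryOfPaths Λ) (Λ₀ S : Set Λ) (w : Λ) : Set (Set Λ) :=
  setRingGenOn {α | α ∈ S ∧ C.r α = w} (relD0 C Λ₀ S w)

/-- A filter in a ring of sets. -/
def IsFilterIn {γ : Type v} (R U : Set (Set γ)) : Prop :=
  U.Nonempty ∧ U ⊆ R ∧ (∀ E ∈ U, E.Nonempty) ∧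
    (∀ E ∈ U, ∀ F ∈ U, E ∩ F ∈ U) ∧ (∀ E ∈ U, ∀ F ∈ R, E ⊆ F → F ∈ U)

/-- An ultrafilter in a ring of sets: a maximal filter. -/
def IsUltrafilterIn {γ : Type v} (R U : Set (Set γ)) : Prop :=
  IsFilterIn R U ∧ ∀ V, IsFilterIn R V → U ⊆ V → V = U

/-- A filter base in a ring of sets. -/
def IsFilterBaseIn {γ : Type v} (R B : Set (Set γ)) : Prop :=
  B.Nonempty ∧ B ⊆ R ∧ (∀ E ∈ B, E.Nonempty) ∧
    ∀ E ∈ B, ∀ F ∈ B, ∃ G ∈ B, G ⊆ E ∩ F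

/-- The filter generated by a filter base. -/
def filterGenBy {γ : Type v} (R B : Set (Set γ)) : Set (Set γ) :=
  {E | E ∈ R ∧ ∃ F ∈ B, F ⊆ E}

/-- An ultrafilter base in a ring of sets. -/
def IsUltrafilterBaseIn {γ : Type v} (R B : Set (Set γ)) : Prop :=
  IsFilterBaseIn R B ∧ IsUltrafilterIn R (filterGenBy R B)

/-- A Boolean ring homomorphism defined on a ring of sets `A` with values in a
generalized Boolean algebra. -/
def IsBRHomOn {γ : Type v} {R : Type*} [GeneralizedBooleanAlgebra R]
    (A : Set (Set γ)) (ν : Set γ → R) : Prop :=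
  ν ∅ = ⊥ ∧ (∀ E ∈ A, ∀ F ∈ A, ν (E ∪ F) = ν E ⊔ ν F) ∧
    (∀ E ∈ A, ∀ F ∈ A, ν (E ∩ F) = ν E ⊓ ν F) ∧
    (∀ E ∈ A, ∀ F ∈ A, ν (E \ F) = ν E \ ν F)

/-- `𝒜_v`: the ring of sets on `vΛ` generated by the tail sets. -/
def tailRing (C : CategoryOfPaths Λ) (w : Λ) : Set (Set Λ) :=
  setRingGenOn (pRng C w) {E | ∃ α, C.r α = w ∧ E = pTail C α}

/-- A directed subset. -/
def pDirected (C : CategoryOfPaths Λ) (x : Set Λ) : Prop :=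
  ∀ α ∈ x, ∀ β ∈ x, (pTail C α ∩ pTail C β ∩ x).Nonempty

/-- A hereditary subset. -/
def pHereditary (C : CategoryOfPaths Λ) (x : Set Λ) : Prop :=
  ∀ γ ∈ x, ∀ α : Λ, γ ∈ pTail C α → α ∈ x

/-- `vΛ*`: the nonempty directed hereditary subsets of `vΛ`. -/
def lamStar (C : CategoryOfPaths Λ) (w : Λ) : Set (Set Λ) :=
  {x | x.Nonempty ∧ x ⊆ pRng C w ∧ pDirected C x ∧ pHereditary C x}

/-- `vΛ**`: the maximal directed subsets of `vΛ`. -/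
def lamStarStar (C : CategoryOfPaths Λ) (w : Λ) : Set (Set Λ) :=
  {x | x ⊆ pRng C w ∧ pDirected C x ∧
    ∀ y, y ⊆ pRng C w → pDirected C y → x ⊆ y → y = x}

/-- `αx = ⋃_{γ ∈ x} [αγ]` for `x ∈ s(α)Λ*`. -/
def pMulStar (C : CategoryOfPaths Λ) (α : Λ) (x : Set Λ) : Set Λ :=
  {δ | ∃ γ ∈ x, C.s α = C.r γ ∧ C.comp α γ ∈ pTail C δ}

/-- `𝒰_{C,0}`. -/
def UC0 (C : CategoryOfPaths Λ) (w : Λ) (x : Set Λ) : Set (Set Λ) :=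
  {E | E ∈ tailRing C w ∧ ∃ α ∈ x, pTail C α ⊆ E}

/-- `𝒰_C`. -/
def UC (C : CategoryOfPaths Λ) (w : Λ) (x : Set Λ) : Set (Set Λ) :=
  {E | E ∈ tailRing C w ∧ ∃ α ∈ x, x ∩ pTail C α ⊆ E}

/-- `X_v = vΛ*` as a type. -/
abbrev Xv (C : CategoryOfPaths Λ) (w : Λ) : Type u := {x : Set Λ // x ∈ lamStar C w}

/-- The topology on `X_v` generated by the sets `Ê`, `E ∈ 𝒜_v`. -/
def XvTop (C : CategoryOfPaths Λ) (w : Λ) : TopologicalSpace (Xv C w) :=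
  TopologicalSpace.generateFrom
    {t | ∃ E ∈ tailRing C w, t = {x : Xv C w | E ∈ UC C w x.1}}

/-- The vertices of `Λ`. -/
abbrev Vertex (C : CategoryOfPaths Λ) : Type u := {w : Λ // C.r w = w}

/-- `X`: the disjoint union of the spaces `X_v`. -/
abbrev Xtotal (C : CategoryOfPaths Λ) : Type u := Σ w : Vertex C, Xv C w.1

/-- The disjoint union topology on `X`. -/
def XtotalTop (C : CategoryOfPaths Λ) : TopologicalSpace (Xtotal C) :=
  letI : ∀ w : Vertex C, TopologicalSpace (Xv C w.1) := fun w => XvTop C w.1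
  inferInstance

/-- The boundary `∂Λ`: the closure of `Λ**` in `X`. -/
def boundarySet (C : CategoryOfPaths Λ) : Set (Xtotal C) :=
  @closure _ (XtotalTop C) {p : Xtotal C | p.2.1 ∈ lamStarStar C p.1.1}

/-- An exhaustive subset of `vΛ`. -/
def ExhaustiveAt (C : CategoryOfPaths Λ) (w : Λ) (F : Set Λ) : Prop :=
  ∀ α, C.r α = w → ∃ β ∈ F, pMeets C α β

/-- An aperiodic point of `Λ*`. -/
def pAperiodic (C : CategoryOfPaths Λ) (x : Set Λ) : Prop :=
  ∀ α ∈ x, ∀ β ∈ x, α ≠ β → pShift C α x ≠ pShift C β x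

/-- A right-aperiodic point of `wΛ*`. -/
def pRightAperiodicAt (C : CategoryOfPaths Λ) (w : Λ) (x : Set Λ) : Prop :=
  ∀ α β : Λ, C.s α = w → C.s β = w → α ≠ β → pMulStar C α x ≠ pMulStar C β x

/-- The triples `(α, β, x)` with `s α = s β` and `x ∈ s(α)Λ*`. -/
abbrev pTrip (C : CategoryOfPaths Λ) : Type u :=
  {t : Λ × Λ × Set Λ // C.s t.1 = C.s t.2.1 ∧ t.2.2 ∈ lamStar C (C.s t.1)}

/-- The groupoid equivalence relation on triples. -/
def tripRel (C : CategoryOfPaths Λ) (t t' : pTrip C) : Prop :=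
  ∃ (z : Set Λ) (δ δ' : Λ),
    z ∈ lamStar C (C.s δ) ∧ z ∈ lamStar C (C.s δ') ∧
    C.s t.1.1 = C.r δ ∧ C.s t'.1.1 = C.r δ' ∧
    t.1.2.2 = pMulStar C δ z ∧ t'.1.2.2 = pMulStar C δ' z ∧
    C.comp t.1.1 δ = C.comp t'.1.1 δ' ∧
    C.comp t.1.2.1 δ = C.comp t'.1.2.1 δ'

/-- The ultrafilter space of `𝒜(Λ₀,Λ)_v`. -/
abbrev relXv (C : CategoryOfPaths Λ) (Λ₀ : Set Λ) (w : Λ) : Type u :=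
  {U : Set (Set Λ) // IsUltrafilterIn (relAring C Λ₀ Set.univ w) U}

/-- The topology on the ultrafilter space of `𝒜(Λ₀,Λ)_v` generated by the `Ê`. -/
def relXvTop (C : CategoryOfPaths Λ) (Λ₀ : Set Λ) (w : Λ) :
    TopologicalSpace (relXv C Λ₀ w) :=
  TopologicalSpace.generateFrom
    {t | ∃ E ∈ relAring C Λ₀ Set.univ w, t = {U : relXv C Λ₀ w | E ∈ U.1}}

/-! ### Auxiliary lemmas for Statement 6 -/

section Statement6Aux

variable {Λ : Type u} {C : CategoryOfPaths Λ}

lemma pMulSet_empty (α : Λ) : pMulSet C α (∅ : Set Λ) = ∅ := by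
  ext x; simp [pMulSet]

lemma pMulSet_union (α : Λ) (E F : Set Λ) :
    pMulSet C α (E ∪ F) = pMulSet C α E ∪ pMulSet C α F := by
  ext x
  simp only [pMulSet, Set.mem_setOf_eq, Set.mem_union]
  constructor
  · rintro ⟨β, hβ | hβ, h1, h2⟩
    · exact Or.inl ⟨β, hβ, h1, h2⟩
    · exact Or.inr ⟨β, hβ, h1, h2⟩
  · rintro (⟨β, hβ, h1, h2⟩ | ⟨β, hβ, h1, h2⟩)
    · exact ⟨β, Or.inl hβ, h1, h2⟩
    · exact ⟨β, Or.inr hβ, h1, h2⟩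

lemma pMulSet_inter (α : Λ) (E F : Set Λ) :
    pMulSet C α (E ∩ F) = pMulSet C α E ∩ pMulSet C α F := by
  ext x
  constructor
  · rintro ⟨β, ⟨hE, hF⟩, h1, rfl⟩
    exact ⟨⟨β, hE, h1, rfl⟩, ⟨β, hF, h1, rfl⟩⟩
  · rintro ⟨⟨β, hE, h1, rfl⟩, ⟨γ, hF, h2, heq⟩⟩
    obtain rfl : β = γ := C.left_cancel h1 h2 heq
    exact ⟨β, ⟨hE, hF⟩, h1, rfl⟩

lemma pMulSet_diff (α : Λ) (E F : Set Λ) :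
    pMulSet C α (E \ F) = pMulSet C α E \ pMulSet C α F := by
  ext x
  constructor
  · rintro ⟨β, ⟨hE, hF⟩, h1, rfl⟩
    refine ⟨⟨β, hE, h1, rfl⟩, ?_⟩
    rintro ⟨γ, hγ, h2, heq⟩
    obtain rfl : β = γ := C.left_cancel h1 h2 heq
    exact hF hγ
  · rintro ⟨⟨β, hE, h1, rfl⟩, hx⟩
    refine ⟨β, ⟨hE, fun hβF => hx ⟨β, hβF, h1, rfl⟩⟩, h1, rfl⟩

lemma pMulSet_subset_pTail (α : Λ) (E : Set Λ) : pMulSet C α E ⊆ pTail C α := by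
  rintro x ⟨β, _, h1, rfl⟩
  exact ⟨β, h1, rfl⟩

lemma pMulSet_nonempty (α : Λ) {E : Set Λ} (hE : E.Nonempty)
    (hsub : ∀ e ∈ E, C.r e = C.s α) : (pMulSet C α E).Nonempty := by
  obtain ⟨e, he⟩ := hE
  exact ⟨C.comp α e, e, he, (hsub e he).symm, rfl⟩

lemma pShift_empty (α : Λ) : pShift C α (∅ : Set Λ) = ∅ := by
  ext x; simp [pShift]

lemma pShift_union (α : Λ) (E F : Set Λ) :
    pShift C α (E ∪ F) = pShift C α E ∪ pShift C α F := by
  ext x; simp only [pShift, Set.mem_setOf_eq, Set.mem_union]; tauto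

lemma pShift_inter (α : Λ) (E F : Set Λ) :
    pShift C α (E ∩ F) = pShift C α E ∩ pShift C α F := by
  ext x; simp only [pShift, Set.mem_setOf_eq, Set.mem_inter_iff]; tauto

lemma pShift_diff (α : Λ) (E F : Set Λ) :
    pShift C α (E \ F) = pShift C α E \ pShift C α F := by
  ext x; simp only [pShift, Set.mem_setOf_eq, Set.mem_diff]; tauto

lemma pShift_mono (α : Λ) {E F : Set Λ} (h : E ⊆ F) :
    pShift C α E ⊆ pShift C α F := fun x hx => ⟨hx.1, h hx.2⟩

lemma pShift_pMulSet (α : Λ) {E : Set Λ} (hE : ∀ e ∈ E, C.r e = C.s α) :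
    pShift C α (pMulSet C α E) = E := by
  ext x
  constructor
  · rintro ⟨h1, β, hβ, h2, heq⟩
    obtain rfl : x = β := C.left_cancel h1 h2 heq
    exact hβ
  · intro hx
    exact ⟨(hE x hx).symm, x, hx, (hE x hx).symm, rfl⟩

lemma pMulSet_pShift (α : Λ) (F : Set Λ) :
    pMulSet C α (pShift C α F) = F ∩ pTail C α := by
  ext x
  constructor
  · rintro ⟨β, ⟨h1, hm⟩, h2, rfl⟩
    exact ⟨hm, β, h1, rfl⟩
  · rintro ⟨hF, β, h1, rfl⟩
    exact ⟨β, ⟨h1, hF⟩, h1, rfl⟩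

/-! Ring-of-sets lemmas -/

lemma subset_setRingGenOn {γ : Type v} (S : Set γ) (G : Set (Set γ)) :
    G ⊆ setRingGenOn S G := fun E hE =>
  Set.mem_sInter.2 fun _R hR => hR.2 hE

lemma powerset_isSetRingOn {γ : Type v} (S : Set γ) :
    IsSetRingOn S {E | E ⊆ S} := by
  refine ⟨⟨Set.empty_subset S, ?_, ?_, ?_⟩, fun E hE => hE⟩
  · intro E hE F hF; exact Set.union_subset hE hF
  · intro E hE F hF; exact (Set.inter_subset_left).trans hE
  · intro E hE F hF; exact (Set.diff_subset).trans hE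

lemma setRingGenOn_isSetRingOn {γ : Type v} {S : Set γ} {G : Set (Set γ)}
    (hG : ∀ E ∈ G, E ⊆ S) : IsSetRingOn S (setRingGenOn S G) := by
  have hmem : {E : Set γ | E ⊆ S} ∈ {R | IsSetRingOn S R ∧ G ⊆ R} :=
    ⟨powerset_isSetRingOn S, hG⟩
  refine ⟨⟨?_, ?_, ?_, ?_⟩, ?_⟩
  · exact Set.mem_sInter.2 fun R hR => hR.1.1.1
  · intro E hE F hF
    exact Set.mem_sInter.2 fun R hR =>
      hR.1.1.2.1 E (Set.mem_sInter.1 hE R hR) F (Set.mem_sInter.1 hF R hR)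
  · intro E hE F hF
    exact Set.mem_sInter.2 fun R hR =>
      hR.1.1.2.2.1 E (Set.mem_sInter.1 hE R hR) F (Set.mem_sInter.1 hF R hR)
  · intro E hE F hF
    exact Set.mem_sInter.2 fun R hR =>
      hR.1.1.2.2.2 E (Set.mem_sInter.1 hE R hR) F (Set.mem_sInter.1 hF R hR)
  · intro E hE
    exact Set.mem_sInter.1 hE _ hmem

lemma setRingGenOn_subset {γ : Type v} {S : Set γ} {G T : Set (Set γ)}
    (hT : IsSetRingOn S T) (hGT : G ⊆ T) : setRingGenOn S G ⊆ T :=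
  Set.sInter_subset_of_mem ⟨hT, hGT⟩

/-! Zigzag lemmas -/

lemma zigzagRelIn_r {l : List (Λ × Λ)} {x y : Λ}
    (hrel : zigzagRelIn C Set.univ l x y) (h : l ≠ []) :
    C.r x = C.s (l.getLast h).2 := by
  induction l generalizing y with
  | nil => exact absurd rfl h
  | cons p rest ih =>
    obtain ⟨z, hz, h1, _, _, _⟩ := hrel
    cases rest with
    | nil =>
      obtain ⟨rfl, -⟩ := hz
      simpa [List.getLast] using h1.symm
    | cons q rest' =>
      have hne : (q :: rest') ≠ [] := by simp
      have := ih hz hne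
      rwa [List.getLast_cons hne]

lemma zigzagRelIn_append_singleton (q : Λ × Λ) (l : List (Λ × Λ)) (x y : Λ) :
    zigzagRelIn C Set.univ (l ++ [q]) x y ↔
      ∃ m, C.s q.2 = C.r x ∧ C.s q.1 = C.r m ∧
        C.comp q.2 x = C.comp q.1 m ∧ zigzagRelIn C Set.univ l m y := by
  induction l generalizing x y with
  | nil =>
    simp only [List.nil_append, zigzagRelIn, Set.mem_univ, and_true, true_and]
    constructor
    · rintro ⟨z, rfl, h1, h2, h3⟩
      exact ⟨y, h1, h2, h3, rfl⟩
    · rintro ⟨m, h1, h2, h3, rfl⟩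
      exact ⟨x, rfl, h1, h2, h3⟩
  | cons p rest ih =>
    simp only [List.cons_append, zigzagRelIn, Set.mem_univ, and_true, true_and]
    constructor
    · rintro ⟨z, hz, h1, h2, h3⟩
      obtain ⟨m, g1, g2, g3, g4⟩ := (ih x z).1 hz
      exact ⟨m, g1, g2, g3, z, g4, h1, h2, h3⟩
    · rintro ⟨m, g1, g2, g3, z, g4, h1, h2, h3⟩
      exact ⟨z, (ih x z).2 ⟨m, g1, g2, g3, g4⟩, h1, h2, h3⟩

lemma zigzagDom_append_mul (l : List (Λ × Λ)) (α : Λ) :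
    zigzagDomIn C Set.univ (l ++ [(α, C.r α)]) =
      pMulSet C α (zigzagDomIn C Set.univ l) := by
  ext x
  simp only [zigzagDomIn, Set.mem_setOf_eq]
  constructor
  · rintro ⟨y, hy⟩
    obtain ⟨m, h1, h2, h3, hrel⟩ := (zigzagRelIn_append_singleton _ l x y).1 hy
    have hrx : C.r x = C.r α := by rw [← h1, C.s_r]
    have hx : x = C.comp α m := by
      have hid : C.comp (C.r α) x = x := by
        have := C.id_comp x; rwa [hrx] at this
      rw [← hid]; exact h3
    exact ⟨m, ⟨y, hrel⟩, h2, hx⟩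
  · rintro ⟨m, ⟨y, hrel⟩, h2, rfl⟩
    refine ⟨y, (zigzagRelIn_append_singleton _ l _ y).2 ⟨m, ?_, h2, ?_, hrel⟩⟩
    · rw [C.s_r, C.r_comp h2]
    · have := C.id_comp (C.comp α m)
      rwa [C.r_comp h2] at this

lemma zigzagDom_append_shift (l : List (Λ × Λ)) (α : Λ) :
    zigzagDomIn C Set.univ (l ++ [(C.r α, α)]) =
      pShift C α (zigzagDomIn C Set.univ l) := by
  ext x
  simp only [zigzagDomIn, pShift, Set.mem_setOf_eq]
  constructor
  · rintro ⟨y, hy⟩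
    obtain ⟨m, h1, h2, h3, hrel⟩ := (zigzagRelIn_append_singleton _ l x y).1 hy
    have hrm : C.r m = C.r α := by rw [← h2, C.s_r]
    have hm : C.comp α x = m := by
      have hid : C.comp (C.r α) m = m := by
        have := C.id_comp m; rwa [hrm] at this
      rw [h3, hid]
    exact ⟨h1, hm ▸ ⟨y, hrel⟩⟩
  · rintro ⟨h1, y, hrel⟩
    refine ⟨y, (zigzagRelIn_append_singleton _ l _ y).2
      ⟨C.comp α x, h1, ?_, ?_, hrel⟩⟩
    · rw [C.s_r, C.r_comp h1]
    · have := C.id_comp (C.comp α x)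
      rw [C.r_comp h1] at this
      exact this.symm

lemma relD0_subset {Λ₀ : Set Λ} {w : Λ} {E : Set Λ}
    (hE : E ∈ relD0 C Λ₀ Set.univ w) :
    E ⊆ {a | a ∈ (Set.univ : Set Λ) ∧ C.r a = w} := by
  obtain ⟨-, l, h, -, -, hlast, rfl⟩ := hE
  rintro x ⟨y, hrel⟩
  exact ⟨trivial, (zigzagRelIn_r hrel h).trans hlast⟩

lemma isZigzag_concat_of {l : List (Λ × Λ)} (h : l ≠ []) (hzig : IsZigzag C l)
    {q : Λ × Λ} (hq : C.r q.1 = C.r q.2) (hchain : C.s q.1 = C.s (l.getLast h).2) :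
    IsZigzag C (l ++ [q]) := by
  constructor
  · intro p hp
    rcases List.mem_append.1 hp with hp | hp
    · exact hzig.1 p hp
    · simp only [List.mem_singleton] at hp; subst hp; exact hq
  · rw [List.Chain', List.isChain_append]
    refine ⟨hzig.2, List.isChain_singleton _, ?_⟩
    intro a ha b hb
    simp only [List.head?_cons, Option.mem_def, Option.some.injEq] at hb
    subst hb
    rw [List.getLast?_eq_getLast h, Option.mem_def, Option.some.injEq] at ha
    subst ha
    exact hchain

lemma relD0_mul {Λ₀ : Set Λ} (hsub : IsSubcategory C Λ₀) {α : Λ} (hα : α ∈ Λ₀)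
    {E : Set Λ} (hE : E ∈ relD0 C Λ₀ Set.univ (C.s α)) :
    pMulSet C α E ∈ relD0 C Λ₀ Set.univ (C.r α) := by
  obtain ⟨hne, l, h, hzig, hmem, hlast, rfl⟩ := hE
  refine ⟨?_, l ++ [(α, C.r α)], by simp, ?_, ?_, ?_,
      (zigzagDom_append_mul l α).symm⟩
  · exact pMulSet_nonempty α hne fun e he =>
      (relD0_subset ⟨hne, l, h, hzig, hmem, hlast, rfl⟩ he).2
  · exact isZigzag_concat_of h hzig (by rw [C.r_r]) (by rw [hlast])
  · intro p hp
    rcases List.mem_append.1 hp with hp | hp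
    · exact hmem p hp
    · simp only [List.mem_singleton] at hp; subst hp
      exact ⟨hα, hsub.r_mem hα⟩
  · rw [List.getLast_concat]
    exact C.s_r α

lemma relD0_shift {Λ₀ : Set Λ} (hsub : IsSubcategory C Λ₀) {α : Λ} (hα : α ∈ Λ₀)
    {F : Set Λ} (hF : F ∈ relD0 C Λ₀ Set.univ (C.r α)) :
    pShift C α F = ∅ ∨ pShift C α F ∈ relD0 C Λ₀ Set.univ (C.s α) := by
  obtain ⟨hne, l, h, hzig, hmem, hlast, rfl⟩ := hF
  by_cases hne' : (pShift C α (zigzagDomIn C Set.univ l)).Nonempty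
  · right
    refine ⟨hne', l ++ [(C.r α, α)], by simp, ?_, ?_, ?_,
        (zigzagDom_append_shift l α).symm⟩
    · exact isZigzag_concat_of h hzig (by rw [C.r_r]) (by rw [C.s_r, hlast])
    · intro p hp
      rcases List.mem_append.1 hp with hp | hp
      · exact hmem p hp
      · simp only [List.mem_singleton] at hp; subst hp
        exact ⟨hsub.r_mem hα, hα⟩
    · rw [List.getLast_concat]
  · left
    exact Set.not_nonempty_iff_eq_empty.1 hne'

lemma pTail_mem_relD0 {Λ₀ : Set Λ} (hsub : IsSubcategory C Λ₀) {α : Λ}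
    (hα : α ∈ Λ₀) : pTail C α ∈ relD0 C Λ₀ Set.univ (C.r α) := by
  have hdom : zigzagDomIn C Set.univ [(α, C.r α)] = pTail C α := by
    have h1 := zigzagDom_append_mul (C := C) [] α
    simp only [List.nil_append] at h1
    rw [h1]
    have : zigzagDomIn C Set.univ ([] : List (Λ × Λ)) = Set.univ := by
      ext x; exact ⟨fun _ => trivial, fun _ => ⟨x, rfl, trivial⟩⟩
    rw [this]
    ext x
    constructor
    · rintro ⟨β, -, h1, h2⟩; exact ⟨β, h1, h2⟩
    · rintro ⟨β, h1, h2⟩; exact ⟨β, trivial, h1, h2⟩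
  refine ⟨⟨α, C.s α, (C.r_s α).symm, (C.comp_id α).symm⟩,
    [(α, C.r α)], by simp, ⟨?_, ?_⟩, ?_, ?_, hdom.symm⟩
  · intro p hp
    simp only [List.mem_singleton] at hp; subst hp
    exact (C.r_r α).symm
  · exact List.isChain_singleton _
  · intro p hp
    simp only [List.mem_singleton] at hp; subst hp
    exact ⟨hα, hsub.r_mem hα⟩
  · exact C.s_r α

lemma relAring_subset {Λ₀ : Set Λ} {w : Λ} {E : Set Λ}
    (hE : E ∈ relAring C Λ₀ Set.univ w) : ∀ x ∈ E, C.r x = w := by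
  intro x hx
  exact ((setRingGenOn_isSetRingOn (fun E hE => relD0_subset hE)).2 E hE hx).2

lemma relAring_isSetRingOn {Λ₀ : Set Λ} (w : Λ) :
    IsSetRingOn {a | a ∈ (Set.univ : Set Λ) ∧ C.r a = w}
      (relAring C Λ₀ Set.univ w) :=
  setRingGenOn_isSetRingOn (fun _E hE => relD0_subset hE)

lemma mul_mem_relAring {Λ₀ : Set Λ} (hsub : IsSubcategory C Λ₀) {α : Λ}
    (hα : α ∈ Λ₀) {E : Set Λ} (hE : E ∈ relAring C Λ₀ Set.univ (C.s α)) :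
    pMulSet C α E ∈ relAring C Λ₀ Set.univ (C.r α) := by
  set Ss : Set Λ := {a | a ∈ (Set.univ : Set Λ) ∧ C.r a = C.s α} with hSs
  have hringr := relAring_isSetRingOn (C := C) (Λ₀ := Λ₀) (C.r α)
  set T : Set (Set Λ) :=
    {E | E ⊆ Ss ∧ pMulSet C α E ∈ relAring C Λ₀ Set.univ (C.r α)} with hT
  have hTring : IsSetRingOn Ss T := by
    refine ⟨⟨⟨Set.empty_subset _, ?_⟩, ?_, ?_, ?_⟩, fun E hE => hE.1⟩
    · rw [pMulSet_empty]; exact hringr.1.1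
    · rintro E ⟨hE1, hE2⟩ F ⟨hF1, hF2⟩
      exact ⟨Set.union_subset hE1 hF1, by rw [pMulSet_union]; exact hringr.1.2.1 _ hE2 _ hF2⟩
    · rintro E ⟨hE1, hE2⟩ F ⟨hF1, hF2⟩
      exact ⟨Set.inter_subset_left.trans hE1, by rw [pMulSet_inter]; exact hringr.1.2.2.1 _ hE2 _ hF2⟩
    · rintro E ⟨hE1, hE2⟩ F ⟨hF1, hF2⟩
      exact ⟨Set.diff_subset.trans hE1, by rw [pMulSet_diff]; exact hringr.1.2.2.2 _ hE2 _ hF2⟩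
  have hGT : relD0 C Λ₀ Set.univ (C.s α) ⊆ T := fun F hF =>
    ⟨relD0_subset hF, subset_setRingGenOn _ _ (relD0_mul hsub hα hF)⟩
  exact (setRingGenOn_subset hTring hGT hE).2

lemma shift_mem_relAring {Λ₀ : Set Λ} (hsub : IsSubcategory C Λ₀) {α : Λ}
    (hα : α ∈ Λ₀) {F : Set Λ} (hF : F ∈ relAring C Λ₀ Set.univ (C.r α)) :
    pShift C α F ∈ relAring C Λ₀ Set.univ (C.s α) := by
  set Sr : Set Λ := {a | a ∈ (Set.univ : Set Λ) ∧ C.r a = C.r α} with hSr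
  have hrings := relAring_isSetRingOn (C := C) (Λ₀ := Λ₀) (C.s α)
  set T : Set (Set Λ) :=
    {F | F ⊆ Sr ∧ pShift C α F ∈ relAring C Λ₀ Set.univ (C.s α)} with hT
  have hTring : IsSetRingOn Sr T := by
    refine ⟨⟨⟨Set.empty_subset _, ?_⟩, ?_, ?_, ?_⟩, fun F hF => hF.1⟩
    · rw [pShift_empty]; exact hrings.1.1
    · rintro E ⟨hE1, hE2⟩ F ⟨hF1, hF2⟩
      exact ⟨Set.union_subset hE1 hF1, by rw [pShift_union]; exact hrings.1.2.1 _ hE2 _ hF2⟩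
    · rintro E ⟨hE1, hE2⟩ F ⟨hF1, hF2⟩
      exact ⟨Set.inter_subset_left.trans hE1, by rw [pShift_inter]; exact hrings.1.2.2.1 _ hE2 _ hF2⟩
    · rintro E ⟨hE1, hE2⟩ F ⟨hF1, hF2⟩
      exact ⟨Set.diff_subset.trans hE1, by rw [pShift_diff]; exact hrings.1.2.2.2 _ hE2 _ hF2⟩
  have hGT : relD0 C Λ₀ Set.univ (C.r α) ⊆ T := by
    intro F hF
    refine ⟨relD0_subset hF, ?_⟩
    rcases relD0_shift hsub hα hF with h | h
    · rw [h]; exact hrings.1.1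
    · exact subset_setRingGenOn _ _ h
  exact (setRingGenOn_subset hTring hGT hF).2

lemma pTail_mem_relAring {Λ₀ : Set Λ} (hsub : IsSubcategory C Λ₀) {α : Λ}
    (hα : α ∈ Λ₀) : pTail C α ∈ relAring C Λ₀ Set.univ (C.r α) :=
  subset_setRingGenOn _ _ (pTail_mem_relD0 hsub hα)

/-! Filter-level lemmas -/

lemma filterGen_mul_eq {Λ₀ : Set Λ} (hsub : IsSubcategory C Λ₀) {α : Λ}
    (hα : α ∈ Λ₀) {U : Set (Set Λ)}
    (hU : IsFilterIn (relAring C Λ₀ Set.univ (C.s α)) U) :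
    filterGenBy (relAring C Λ₀ Set.univ (C.r α)) (pMulSet C α '' U) =
      {F | F ∈ relAring C Λ₀ Set.univ (C.r α) ∧ pShift C α F ∈ U} := by
  ext F
  simp only [filterGenBy, Set.mem_setOf_eq, Set.mem_image]
  constructor
  · rintro ⟨hFR, G, ⟨E, hEU, rfl⟩, hGF⟩
    refine ⟨hFR, ?_⟩
    have hEsub : ∀ e ∈ E, C.r e = C.s α := relAring_subset (hU.2.1 hEU)
    have hE' : E ⊆ pShift C α F := by
      rw [← pShift_pMulSet α hEsub]
      exact pShift_mono α hGF
    exact hU.2.2.2.2 E hEU _ (shift_mem_relAring hsub hα hFR) hE'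
  · rintro ⟨hFR, hshift⟩
    refine ⟨hFR, pMulSet C α (pShift C α F), ⟨pShift C α F, hshift, rfl⟩, ?_⟩
    rw [pMulSet_pShift]
    exact Set.inter_subset_left

lemma pShift_nonempty_of_mem {α : Λ} {F : Set Λ} (h : (pShift C α F).Nonempty) :
    F.Nonempty := by
  obtain ⟨β, _, hβ⟩ := h
  exact ⟨C.comp α β, hβ⟩

/-- `{F ∈ Rr | σ^α F ∈ U}` is a filter whenever `U` is. -/
lemma shift_preimage_isFilter {Λ₀ : Set Λ} (hsub : IsSubcategory C Λ₀) {α : Λ}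
    (hα : α ∈ Λ₀) {U : Set (Set Λ)}
    (hU : IsFilterIn (relAring C Λ₀ Set.univ (C.s α)) U) :
    IsFilterIn (relAring C Λ₀ Set.univ (C.r α))
      {F | F ∈ relAring C Λ₀ Set.univ (C.r α) ∧ pShift C α F ∈ U} := by
  refine ⟨?_, fun F hF => hF.1, ?_, ?_, ?_⟩
  · obtain ⟨E, hEU⟩ := hU.1
    have hER := hU.2.1 hEU
    refine ⟨pMulSet C α E, mul_mem_relAring hsub hα hER, ?_⟩
    rwa [pShift_pMulSet α (relAring_subset hER)]
  · rintro F ⟨-, hFU⟩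
    exact pShift_nonempty_of_mem (hU.2.2.1 _ hFU)
  · rintro E ⟨hER, hEU⟩ F ⟨hFR, hFU⟩
    refine ⟨(relAring_isSetRingOn _).1.2.2.1 E hER F hFR, ?_⟩
    rw [pShift_inter]
    exact hU.2.2.2.1 _ hEU _ hFU
  · rintro E ⟨hER, hEU⟩ F hFR hEF
    exact ⟨hFR, hU.2.2.2.2 _ hEU _ (shift_mem_relAring hsub hα hFR)
      (pShift_mono α hEF)⟩

/-- `σ^α '' V` is a filter whenever `V` is a filter containing `αΛ`. -/
lemma shift_image_isFilter {Λ₀ : Set Λ} (hsub : IsSubcategory C Λ₀) {α : Λ}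
    (hα : α ∈ Λ₀) {V : Set (Set Λ)}
    (hV : IsFilterIn (relAring C Λ₀ Set.univ (C.r α)) V)
    (hαV : pTail C α ∈ V) :
    IsFilterIn (relAring C Λ₀ Set.univ (C.s α)) (pShift C α '' V) := by
  have hinterV : ∀ F ∈ V, F ∩ pTail C α ∈ V := fun F hF =>
    hV.2.2.2.1 F hF _ hαV
  refine ⟨hV.1.image _, ?_, ?_, ?_, ?_⟩
  · rintro E ⟨F, hFV, rfl⟩
    exact shift_mem_relAring hsub hα (hV.2.1 hFV)
  · rintro E ⟨F, hFV, rfl⟩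
    obtain ⟨x, hxF, β, h1, rfl⟩ := hV.2.2.1 _ (hinterV F hFV)
    exact ⟨β, h1, hxF⟩
  · rintro E ⟨F, hFV, rfl⟩ E' ⟨F', hF'V, rfl⟩
    exact ⟨F ∩ F', hV.2.2.2.1 F hFV F' hF'V, pShift_inter α F F'⟩
  · rintro E ⟨F, hFV, rfl⟩ E' hE'R hEE'
    have h1 : F ∩ pTail C α ⊆ pMulSet C α E' := by
      rw [← pMulSet_pShift α F]
      rintro x ⟨β, hβ, h2, rfl⟩
      exact ⟨β, hEE' hβ, h2, rfl⟩
    have h2 : pMulSet C α E' ∈ V :=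
      hV.2.2.2.2 _ (hinterV F hFV) _ (mul_mem_relAring hsub hα hE'R) h1
    exact ⟨pMulSet C α E', h2, pShift_pMulSet α (relAring_subset hE'R)⟩

lemma filterGen_mul_isUltra {Λ₀ : Set Λ} (hsub : IsSubcategory C Λ₀) {α : Λ}
    (hα : α ∈ Λ₀) {U : Set (Set Λ)}
    (hU : IsUltrafilterIn (relAring C Λ₀ Set.univ (C.s α)) U) :
    IsUltrafilterIn (relAring C Λ₀ Set.univ (C.r α))
      (filterGenBy (relAring C Λ₀ Set.univ (C.r α)) (pMulSet C α '' U)) := by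
  rw [filterGen_mul_eq hsub hα hU.1]
  set V : Set (Set Λ) :=
    {F | F ∈ relAring C Λ₀ Set.univ (C.r α) ∧ pShift C α F ∈ U} with hVdef
  have hVfilt := shift_preimage_isFilter hsub hα hU.1
  refine ⟨hVfilt, ?_⟩
  intro W hW hVW
  -- αΛ ∈ V ⊆ W
  have hαV : pTail C α ∈ V := by
    obtain ⟨E, hEU⟩ := hU.1.1
    have hER := hU.1.2.1 hEU
    refine ⟨pTail_mem_relAring hsub hα, ?_⟩
    refine hU.1.2.2.2.2 E hEU _
      (shift_mem_relAring hsub hα (pTail_mem_relAring hsub hα)) ?_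
    intro e he
    have hre := relAring_subset hER e he
    exact ⟨hre.symm, e, hre.symm, rfl⟩
  have hαW : pTail C α ∈ W := hVW hαV
  -- U' = σ^α '' W is a filter containing U, hence equals U
  have hU'filt := shift_image_isFilter hsub hα hW hαW
  have hUU' : U ⊆ pShift C α '' W := by
    intro E hEU
    have hER := hU.1.2.1 hEU
    have hgE : pMulSet C α E ∈ W := by
      apply hVW
      refine ⟨mul_mem_relAring hsub hα hER, ?_⟩
      rwa [pShift_pMulSet α (relAring_subset hER)]
    exact ⟨pMulSet C α E, hgE, pShift_pMulSet α (relAring_subset hER)⟩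
  have hU'eq : pShift C α '' W = U := hU.2 _ hU'filt hUU'
  -- hence W ⊆ V
  apply Set.Subset.antisymm _ hVW
  intro F hFW
  refine ⟨hW.2.1 hFW, ?_⟩
  rw [← hU'eq]
  exact ⟨F, hFW, rfl⟩

lemma shift_image_isUltra {Λ₀ : Set Λ} (hsub : IsSubcategory C Λ₀) {α : Λ}
    (hα : α ∈ Λ₀) {V : Set (Set Λ)}
    (hV : IsUltrafilterIn (relAring C Λ₀ Set.univ (C.r α)) V)
    (hαV : pTail C α ∈ V) :
    IsUltrafilterIn (relAring C Λ₀ Set.univ (C.s α)) (pShift C α '' V) := by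
  refine ⟨shift_image_isFilter hsub hα hV.1 hαV, ?_⟩
  intro U'' hU'' hsubU''
  set W' : Set (Set Λ) :=
    {F | F ∈ relAring C Λ₀ Set.univ (C.r α) ∧ pShift C α F ∈ U''} with hW'
  have hW'filt := shift_preimage_isFilter hsub hα hU''
  have hVW' : V ⊆ W' := fun F hFV =>
    ⟨hV.1.2.1 hFV, hsubU'' ⟨F, hFV, rfl⟩⟩
  have hW'eq : W' = V := hV.2 _ hW'filt hVW'
  apply Set.Subset.antisymm _ hsubU''
  intro E hEU''
  have hER := hU''.2.1 hEU''
  have hgE : pMulSet C α E ∈ W' := by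
    refine ⟨mul_mem_relAring hsub hα hER, ?_⟩
    rwa [pShift_pMulSet α (relAring_subset hER)]
  rw [hW'eq] at hgE
  exact ⟨pMulSet C α E, hgE, pShift_pMulSet α (relAring_subset hER)⟩

lemma filterGen_shift_image {Λ₀ : Set Λ} (hsub : IsSubcategory C Λ₀) {α : Λ}
    (hα : α ∈ Λ₀) {V : Set (Set Λ)}
    (hV : IsUltrafilterIn (relAring C Λ₀ Set.univ (C.r α)) V)
    (hαV : pTail C α ∈ V) :
    filterGenBy (relAring C Λ₀ Set.univ (C.r α))
      (pMulSet C α '' (pShift C α '' V)) = V := by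
  rw [filterGen_mul_eq hsub hα (shift_image_isFilter hsub hα hV.1 hαV)]
  ext F
  constructor
  · rintro ⟨hFR, F', hF'V, hFF'⟩
    have h1 : F ∩ pTail C α = F' ∩ pTail C α := by
      rw [← pMulSet_pShift α F, ← pMulSet_pShift α F', hFF']
    have h2 : F' ∩ pTail C α ∈ V := hV.1.2.2.2.1 F' hF'V _ hαV
    rw [← h1] at h2
    exact hV.1.2.2.2.2 _ h2 F hFR Set.inter_subset_left
  · intro hFV
    exact ⟨hV.1.2.1 hFV, F, hFV, rfl⟩

end Statement6Aux
/-- Theorem 4.2. For `α ∈ Λ₀`, concatenation by `α` induces a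
well-defined injective continuous map `α̂ : X_{s(α)} → X_{r(α)}` between the
ultrafilter spaces, whose range consists of the ultrafilters containing `αΛ`. -/
theorem statement6 {Λ : Type u} (C : CategoryOfPaths Λ) (Λ₀ : Set Λ)
    (hsub : IsSubcategory C Λ₀) (α : Λ) (hα : α ∈ Λ₀) :
    ∃ f : relXv C Λ₀ (C.s α) → relXv C Λ₀ (C.r α),
      (∀ U : relXv C Λ₀ (C.s α),
        (f U).1 = filterGenBy (relAring C Λ₀ Set.univ (C.r α)) ((pMulSet C α) '' U.1)) ∧
      Function.Injective f ∧
      @Continuous _ _ (relXvTop C Λ₀ (C.s α)) (relXvTop C Λ₀ (C.r α)) f ∧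
      (∀ V : relXv C Λ₀ (C.r α), V ∈ Set.range f ↔ pTail C α ∈ V.1) := by
  refine ⟨fun U => ⟨filterGenBy (relAring C Λ₀ Set.univ (C.r α)) (pMulSet C α '' U.1),
    filterGen_mul_isUltra hsub hα U.2⟩, fun U => rfl, ?_, ?_, ?_⟩
  · -- injectivity
    have key : ∀ A B : relXv C Λ₀ (C.s α),
        {F | F ∈ relAring C Λ₀ Set.univ (C.r α) ∧ pShift C α F ∈ A.1} =
          {F | F ∈ relAring C Λ₀ Set.univ (C.r α) ∧ pShift C α F ∈ B.1} →
        A.1 ⊆ B.1 := by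
      intro A B hAB E hEA
      have hER := A.2.1.2.1 hEA
      have h1 : pMulSet C α E ∈
          {F | F ∈ relAring C Λ₀ Set.univ (C.r α) ∧ pShift C α F ∈ A.1} :=
        ⟨mul_mem_relAring hsub hα hER, by
          rwa [pShift_pMulSet α (relAring_subset hER)]⟩
      rw [hAB] at h1
      have h2 := h1.2
      rwa [pShift_pMulSet α (relAring_subset hER)] at h2
    intro U1 U2 h
    have h' : filterGenBy (relAring C Λ₀ Set.univ (C.r α)) (pMulSet C α '' U1.1) =
        filterGenBy (relAring C Λ₀ Set.univ (C.r α)) (pMulSet C α '' U2.1) :=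
      congrArg Subtype.val h
    rw [filterGen_mul_eq hsub hα U1.2.1, filterGen_mul_eq hsub hα U2.2.1] at h'
    exact Subtype.ext (Set.Subset.antisymm (key U1 U2 h') (key U2 U1 h'.symm))
  · -- continuity
    unfold relXvTop
    apply continuous_generateFrom_iff.mpr
    rintro t ⟨E, hE, rfl⟩
    have heq : (fun U : relXv C Λ₀ (C.s α) =>
        (⟨filterGenBy (relAring C Λ₀ Set.univ (C.r α)) (pMulSet C α '' U.1),
          filterGen_mul_isUltra hsub hα U.2⟩ : relXv C Λ₀ (C.r α))) ⁻¹'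
          {V : relXv C Λ₀ (C.r α) | E ∈ V.1} =
        {U : relXv C Λ₀ (C.s α) | pShift C α E ∈ U.1} := by
      ext U
      simp only [Set.mem_preimage, Set.mem_setOf_eq]
      rw [filterGen_mul_eq hsub hα U.2.1]
      exact ⟨fun h => h.2, fun h => ⟨hE, h⟩⟩
    rw [heq]
    exact TopologicalSpace.GenerateOpen.basic _
      ⟨pShift C α E, shift_mem_relAring hsub hα hE, rfl⟩
  · -- range
    intro V
    constructor
    · rintro ⟨U, rfl⟩
      obtain ⟨E, hEU⟩ := U.2.1.1
      exact ⟨pTail_mem_relAring hsub hα, pMulSet C α E, ⟨E, hEU, rfl⟩,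
        pMulSet_subset_pTail α E⟩
    · intro hαV
      exact ⟨⟨pShift C α '' V.1, shift_image_isUltra hsub hα V.2 hαV⟩,
        Subtype.ext (filterGen_shift_image hsub hα V.2 hαV)⟩
end

section
/- Let (Λ₀, Λ) be a relative category of paths, v a vertex of Λ₀, R a generalized Boolean algebra, and μ : 𝒟(Λ₀,Λ)⁰_v → R. Then μ extends to a Boolean ring homomorphism 𝒜(Λ₀,Λ)_v → R if and only if the following two conditions hold: (1) for all E, F ∈ 𝒟(Λ₀,Λ)⁰_v, if E ∩ F ≠ ∅ then E ∩ F ∈ 𝒟(Λ₀,Λ)⁰_v and μ(E ∩ F) = μ(E) ⊓ μ(F), while if E ∩ F = ∅ then μ(E) ⊓ μ(F) = ⊥; (2) μ(E) = μ(F₁) ⊔ ⋯ ⊔ μ(Fₙ) whenever E, F₁, …, Fₙ ∈ 𝒟(Λ₀,Λ)⁰_v and E = F₁ ∪ ⋯ ∪ Fₙ. In this case the extension to 𝒜(Λ₀,Λ)_v is unique. -/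
universe u v

variable {Λ : Type u}

namespace St7

variable {γ : Type*} {R : Type*} [GeneralizedBooleanAlgebra R]

/-- Union of a list of sets. -/
def lU (l : List (Set γ)) : Set γ := l.foldr (· ∪ ·) ∅

@[simp] lemma lU_nil : lU ([] : List (Set γ)) = ∅ := rfl
@[simp] lemma lU_cons (F : Set γ) (l : List (Set γ)) : lU (F :: l) = F ∪ lU l := rfl

lemma mem_lU {l : List (Set γ)} {x : γ} : x ∈ lU l ↔ ∃ F ∈ l, x ∈ F := by
  induction l with
  | nil => simp
  | cons F l ih => simp [ih]

lemma lU_append (l₁ l₂ : List (Set γ)) : lU (l₁ ++ l₂) = lU l₁ ∪ lU l₂ := by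
  induction l₁ with
  | nil => simp
  | cons F l ih => simp [ih, Set.union_assoc]

lemma subset_lU {l : List (Set γ)} {F : Set γ} (h : F ∈ l) : F ⊆ lU l :=
  fun x hx => mem_lU.2 ⟨F, h, hx⟩

lemma lU_subset {l : List (Set γ)} {T : Set γ} (h : ∀ F ∈ l, F ⊆ T) : lU l ⊆ T := by
  intro x hx; obtain ⟨F, hF, hxF⟩ := mem_lU.1 hx; exact h F hF hxF

/-- Supremum of a list. -/
def sS (l : List R) : R := l.foldr (· ⊔ ·) ⊥

@[simp] lemma sS_nil : sS ([] : List R) = ⊥ := rfl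
@[simp] lemma sS_cons (a : R) (l : List R) : sS (a :: l) = a ⊔ sS l := rfl

lemma sS_append (l₁ l₂ : List R) : sS (l₁ ++ l₂) = sS l₁ ⊔ sS l₂ := by
  induction l₁ with
  | nil => simp
  | cons a l ih => simp [ih, sup_assoc]

lemma le_sS {l : List R} {a : R} (h : a ∈ l) : a ≤ sS l := by
  induction l with
  | nil => simp at h
  | cons b l ih =>
      rcases List.mem_cons.1 h with rfl | h
      · exact le_sup_left
      · exact (ih h).trans le_sup_right

lemma sS_le {l : List R} {t : R} (h : ∀ a ∈ l, a ≤ t) : sS l ≤ t := by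
  induction l with
  | nil => simp
  | cons a l ih => exact sup_le (h a (by simp)) (ih fun b hb => h b (List.mem_cons_of_mem _ hb))

lemma sS_split (l₁ l₂ : List R) (a : R) : sS (l₁ ++ a :: l₂) = a ⊔ sS (l₁ ++ l₂) := by
  induction l₁ with
  | nil => simp
  | cons b l ih => simp only [List.cons_append, sS_cons, ih, sup_left_comm]

lemma lU_split (l₁ l₂ : List (Set γ)) (A : Set γ) :
    lU (l₁ ++ A :: l₂) = A ∪ lU (l₁ ++ l₂) := by
  induction l₁ with
  | nil => simp
  | cons B l ih => simp only [List.cons_append, lU_cons, ih, Set.union_left_comm]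

/-- A cell `E \ (F₁ ∪ ⋯ ∪ Fₖ)`. -/
def cSet (c : Set γ × List (Set γ)) : Set γ := c.1 \ lU c.2

/-- The value of a cell. -/
def cVal (μ : Set γ → R) (c : Set γ × List (Set γ)) : R := μ c.1 \ sS (c.2.map μ)

/-- Hypotheses on `μ : 𝒟 → R`. -/
structure MuOK (D : Set (Set γ)) (μ : Set γ → R) : Prop where
  inter : ∀ E ∈ D, ∀ F ∈ D, (E ∩ F).Nonempty → E ∩ F ∈ D ∧ μ (E ∩ F) = μ E ⊓ μ F
  empty : ∀ E ∈ D, ∀ F ∈ D, E ∩ F = ∅ → μ E ⊓ μ F = ⊥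
  cover : ∀ E ∈ D, ∀ l : List (Set γ), (∀ F ∈ l, F ∈ D) → E = lU l → μ E = sS (l.map μ)

variable {D : Set (Set γ)} {μ : Set γ → R}

lemma MuOK.mono (h : MuOK D μ) {E : Set γ} {l : List (Set γ)} (hE : E ∈ D)
    (hl : ∀ F ∈ l, F ∈ D) (hsub : E ⊆ lU l) : μ E ≤ sS (l.map μ) := by
  classical
  set l' := l.filterMap (fun F => if (E ∩ F) = ∅ then none else some (E ∩ F)) with hl'def
  have hmem : ∀ X ∈ l', ∃ F ∈ l, E ∩ F ≠ ∅ ∧ X = E ∩ F := by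
    intro X hX
    rw [hl'def, List.mem_filterMap] at hX
    obtain ⟨F, hF, hFX⟩ := hX
    by_cases hEF : E ∩ F = ∅
    · simp [hEF] at hFX
    · simp only [hEF, if_false, Option.some.injEq] at hFX
      exact ⟨F, hF, hEF, hFX.symm⟩
  have hl'D : ∀ X ∈ l', X ∈ D := by
    intro X hX
    obtain ⟨F, hF, hne, rfl⟩ := hmem X hX
    exact (h.inter E hE F (hl F hF) (Set.nonempty_iff_ne_empty.2 hne)).1
  have hEl' : E = lU l' := by
    apply Set.Subset.antisymm
    · intro x hx
      obtain ⟨F, hF, hxF⟩ := mem_lU.1 (hsub hx)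
      have hne : E ∩ F ≠ ∅ := fun hc => by
        have : x ∈ E ∩ F := ⟨hx, hxF⟩
        rw [hc] at this; exact this
      refine mem_lU.2 ⟨E ∩ F, ?_, ⟨hx, hxF⟩⟩
      rw [hl'def, List.mem_filterMap]
      exact ⟨F, hF, by simp [hne]⟩
    · refine lU_subset fun X hX => ?_
      obtain ⟨F, _, _, rfl⟩ := hmem X hX
      exact Set.inter_subset_left
  rw [h.cover E hE l' hl'D hEl']
  refine sS_le fun a ha => ?_
  obtain ⟨X, hX, rfl⟩ := List.mem_map.1 ha
  obtain ⟨F, hF, hne, rfl⟩ := hmem X hX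
  rw [(h.inter E hE F (hl F hF) (Set.nonempty_iff_ne_empty.2 hne)).2]
  exact inf_le_right.trans (le_sS (List.mem_map.2 ⟨F, hF, rfl⟩))

lemma MuOK.key_flat (h : MuOK D μ) (E : Set γ) (f : List (Set γ))
    (L : List (Set γ × List (Set γ))) (hE : E ∈ D) (hf : ∀ F ∈ f, F ∈ D)
    (hL : ∀ c ∈ L, c.1 ∈ D ∧ ∀ F ∈ c.2, F ∈ D)
    (hflat : ∀ c ∈ L, c.2 = ([] : List (Set γ)))
    (hsub : E \ lU f ⊆ lU (L.map cSet)) :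
    μ E \ sS (f.map μ) ≤ sS (L.map (cVal μ)) := by
  have h1 : L.map cSet = L.map (·.1) :=
    List.map_congr_left fun c hc => by simp [cSet, hflat c hc]
  have h2 : L.map (cVal μ) = (L.map (·.1)).map μ := by
    rw [List.map_map]
    exact List.map_congr_left fun c hc => by simp [cVal, hflat c hc]
  have hcov : E ⊆ lU (f ++ L.map (·.1)) := by
    rw [lU_append]
    rw [h1] at hsub
    exact Set.diff_subset_iff.1 hsub
  have hmem : ∀ F ∈ f ++ L.map (·.1), F ∈ D := by
    intro F hF
    rcases List.mem_append.1 hF with hF | hF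
    · exact hf F hF
    · obtain ⟨c, hc, rfl⟩ := List.mem_map.1 hF
      exact (hL c hc).1
  have := h.mono hE hmem hcov
  rw [List.map_append, sS_append] at this
  rw [h2]
  exact sdiff_le_iff.2 this

lemma MuOK.key (h : MuOK D μ) : ∀ (N : ℕ) (E : Set γ) (f : List (Set γ))
    (L : List (Set γ × List (Set γ))), E ∈ D → (∀ F ∈ f, F ∈ D) →
    (∀ c ∈ L, c.1 ∈ D ∧ ∀ F ∈ c.2, F ∈ D) →
    (L.map fun c => c.2.length).sum ≤ N → E \ lU f ⊆ lU (L.map cSet) →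
    μ E \ sS (f.map μ) ≤ sS (L.map (cVal μ)) := by
  intro N
  induction N with
  | zero =>
      intro E f L hE hf hL hsum hsub
      refine h.key_flat E f L hE hf hL (fun c hc => ?_) hsub
      have : c.2.length ≤ (L.map fun c => c.2.length).sum :=
        List.single_le_sum (fun _ _ => Nat.zero_le _) _ (List.mem_map.2 ⟨c, hc, rfl⟩)
      have hz : c.2.length = 0 := Nat.le_zero.1 (this.trans hsum)
      exact List.eq_nil_of_length_eq_zero hz
  | succ N ih =>
      intro E f L hE hf hL hsum hsub
      by_cases hex : ∃ c ∈ L, c.2 ≠ []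
      · obtain ⟨c₀, hc₀, hne⟩ := hex
        obtain ⟨L₁, L₂, rfl⟩ : ∃ L₁ L₂, L = L₁ ++ c₀ :: L₂ := List.append_of_mem hc₀
        obtain ⟨G, g, hGg⟩ : ∃ G g, c₀.2 = G :: g := by
          cases hc : c₀.2 with
          | nil => exact absurd hc hne
          | cons a t => exact ⟨a, t, rfl⟩
        have hE'D : c₀.1 ∈ D := (hL c₀ hc₀).1
        have hGD : G ∈ D := (hL c₀ hc₀).2 G (by rw [hGg]; exact List.mem_cons_self)
        have hgD : ∀ F ∈ g, F ∈ D := fun F hF =>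
          (hL c₀ hc₀).2 F (by rw [hGg]; exact List.mem_cons_of_mem _ hF)
        have hL12 : ∀ c ∈ L₁ ++ L₂, c.1 ∈ D ∧ ∀ F ∈ c.2, F ∈ D := by
          intro c hc
          rcases List.mem_append.1 hc with hc | hc
          · exact hL c (List.mem_append.2 (Or.inl hc))
          · exact hL c (List.mem_append.2 (Or.inr (List.mem_cons_of_mem _ hc)))
        -- sums
        have hsums : ((((c₀.1, g) :: (L₁ ++ L₂)).map fun c => c.2.length).sum ≤ N) ∧
            (((L₁ ++ L₂).map fun c => c.2.length).sum ≤ N) := by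
          simp only [List.map_append, List.map_cons, List.sum_append, List.sum_cons,
            hGg, List.length_cons] at hsum ⊢
          omega
        -- Part A
        have hsubA : E \ lU f ⊆ lU ((((c₀.1, g) : Set γ × List (Set γ)) :: (L₁ ++ L₂)).map cSet) := by
          refine hsub.trans ?_
          rw [List.map_append, List.map_cons, lU_split, List.map_cons, lU_cons,
            ← List.map_append]
          refine Set.union_subset_union_left _ ?_
          show cSet c₀ ⊆ cSet (c₀.1, g)
          refine Set.diff_subset_diff_right ?_
          rw [hGg]
          exact Set.subset_union_right
        have hOKA : ∀ c ∈ ((c₀.1, g) : Set γ × List (Set γ)) :: (L₁ ++ L₂),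
            c.1 ∈ D ∧ ∀ F ∈ c.2, F ∈ D := by
          intro c hc
          rcases List.mem_cons.1 hc with rfl | hc
          · exact ⟨hE'D, hgD⟩
          · exact hL12 c hc
        have hA := ih E f (((c₀.1, g) : Set γ × List (Set γ)) :: (L₁ ++ L₂)) hE hf hOKA
          hsums.1 hsubA
        rw [List.map_cons, sS_cons] at hA
        -- Part B
        have hB : (μ E ⊓ μ G) \ sS (f.map μ) ≤ sS ((L₁ ++ L₂).map (cVal μ)) := by
          by_cases hEG : E ∩ G = ∅
          · rw [h.empty E hE G hGD hEG, bot_sdiff]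
            exact bot_le
          · have hne' : (E ∩ G).Nonempty := Set.nonempty_iff_ne_empty.2 hEG
            obtain ⟨hEGD, hEGμ⟩ := h.inter E hE G hGD hne'
            have hsubB : (E ∩ G) \ lU f ⊆ lU ((L₁ ++ L₂).map cSet) := by
              intro x hx
              have hx1 : x ∈ E \ lU f := ⟨hx.1.1, hx.2⟩
              have hx2 := hsub hx1
              rw [List.map_append, List.map_cons, lU_split, ← List.map_append] at hx2
              rcases hx2 with hx2 | hx2
              · exfalso
                have : x ∉ G := by
                  intro hxG
                  exact hx2.2 (by rw [hGg]; exact (lU_cons G g) ▸ Or.inl hxG)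
                exact this hx.1.2
              · exact hx2
            have := ih (E ∩ G) f (L₁ ++ L₂) hEGD hf hL12 hsums.2 hsubB
            rwa [hEGμ] at this
        -- combine
        have hsplit : sS ((L₁ ++ c₀ :: L₂).map (cVal μ)) =
            cVal μ c₀ ⊔ sS ((L₁ ++ L₂).map (cVal μ)) := by
          rw [List.map_append, List.map_cons, sS_split, ← List.map_append]
        rw [hsplit]
        have hx : μ E \ sS (f.map μ) =
            ((μ E \ sS (f.map μ)) \ μ G) ⊔ ((μ E \ sS (f.map μ)) ⊓ μ G) := by
          rw [sup_comm, sup_inf_sdiff]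
        rw [hx]
        refine sup_le ?_ ?_
        · have h1 : (μ E \ sS (f.map μ)) \ μ G ≤
              (cVal μ (c₀.1, g) ⊔ sS ((L₁ ++ L₂).map (cVal μ))) \ μ G :=
            sdiff_le_sdiff_right hA
          refine h1.trans ?_
          rw [sup_sdiff]
          refine sup_le_sup ?_ sdiff_le
          show cVal μ (c₀.1, g) \ μ G ≤ cVal μ c₀
          have : cVal μ c₀ = cVal μ (c₀.1, g) \ μ G := by
            show μ c₀.1 \ sS (c₀.2.map μ) = (μ c₀.1 \ sS (g.map μ)) \ μ G
            rw [hGg, List.map_cons, sS_cons, sdiff_sdiff, sup_comm]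
          rw [this]
        · rw [sdiff_inf_right_comm]
          exact hB.trans le_sup_right
      · push_neg at hex
        exact h.key_flat E f L hE hf hL hex hsub

/-- Representation of a set together with a value, as a finite union of cells. -/
def Rep (D : Set (Set γ)) (μ : Set γ → R) (A : Set γ) (x : R) : Prop :=
  ∃ L : List (Set γ × List (Set γ)), (∀ c ∈ L, c.1 ∈ D ∧ ∀ F ∈ c.2, F ∈ D) ∧
    A = lU (L.map cSet) ∧ x = sS (L.map (cVal μ))

lemma rep_empty : Rep D μ ∅ ⊥ := ⟨[], by simp, by simp, by simp⟩

lemma rep_gen {E : Set γ} (hE : E ∈ D) : Rep D μ E (μ E) := by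
  refine ⟨[(E, [])], ?_, ?_, ?_⟩
  · intro c hc; rw [List.mem_singleton] at hc; subst hc; exact ⟨hE, by simp⟩
  · simp [cSet]
  · simp [cVal]

lemma rep_union {A B : Set γ} {x y : R} (hA : Rep D μ A x) (hB : Rep D μ B y) :
    Rep D μ (A ∪ B) (x ⊔ y) := by
  obtain ⟨L₁, hL₁, rfl, rfl⟩ := hA
  obtain ⟨L₂, hL₂, rfl, rfl⟩ := hB
  refine ⟨L₁ ++ L₂, ?_, ?_, ?_⟩
  · intro c hc
    rcases List.mem_append.1 hc with hc | hc
    · exact hL₁ c hc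
    · exact hL₂ c hc
  · rw [List.map_append, lU_append]
  · rw [List.map_append, sS_append]

lemma rep_cell_inter (h : MuOK D μ) {c d : Set γ × List (Set γ)}
    (hc : c.1 ∈ D ∧ ∀ F ∈ c.2, F ∈ D) (hd : d.1 ∈ D ∧ ∀ F ∈ d.2, F ∈ D) :
    Rep D μ (cSet c ∩ cSet d) (cVal μ c ⊓ cVal μ d) := by
  have hset : cSet c ∩ cSet d = (c.1 ∩ d.1) \ lU (c.2 ++ d.2) := by
    ext x
    simp only [cSet, lU_append, Set.mem_inter_iff, Set.mem_diff, Set.mem_union]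
    tauto
  have hval : cVal μ c ⊓ cVal μ d =
      (μ c.1 ⊓ μ d.1) \ (sS (c.2.map μ) ⊔ sS (d.2.map μ)) := by
    show (μ c.1 \ sS (c.2.map μ)) ⊓ (μ d.1 \ sS (d.2.map μ)) = _
    rw [← inf_sdiff_assoc, sdiff_inf_right_comm, sdiff_sdiff]
  by_cases hcd : c.1 ∩ d.1 = ∅
  · have hbot : μ c.1 ⊓ μ d.1 = ⊥ := h.empty c.1 hc.1 d.1 hd.1 hcd
    rw [hset, hval, hbot, bot_sdiff, hcd, Set.empty_diff]
    exact rep_empty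
  · obtain ⟨hD, hμ⟩ := h.inter c.1 hc.1 d.1 hd.1 (Set.nonempty_iff_ne_empty.2 hcd)
    refine ⟨[(c.1 ∩ d.1, c.2 ++ d.2)], ?_, ?_, ?_⟩
    · intro e he; rw [List.mem_singleton] at he; subst he
      refine ⟨hD, fun F hF => ?_⟩
      rcases List.mem_append.1 hF with hF | hF
      · exact hc.2 F hF
      · exact hd.2 F hF
    · simp only [List.map_cons, List.map_nil, lU_cons, lU_nil, Set.union_empty]
      exact hset
    · have hval2 : cVal μ (c.1 ∩ d.1, c.2 ++ d.2) =
          (μ c.1 ⊓ μ d.1) \ (sS (c.2.map μ) ⊔ sS (d.2.map μ)) := by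
        show μ (c.1 ∩ d.1) \ sS ((c.2 ++ d.2).map μ) = _
        rw [hμ, List.map_append, sS_append]
      simp only [List.map_cons, List.map_nil, sS_cons, sS_nil, sup_bot_eq]
      rw [hval, hval2]

lemma rep_cell_inter_list (h : MuOK D μ) {c : Set γ × List (Set γ)}
    (hc : c.1 ∈ D ∧ ∀ F ∈ c.2, F ∈ D) (L : List (Set γ × List (Set γ)))
    (hL : ∀ d ∈ L, d.1 ∈ D ∧ ∀ F ∈ d.2, F ∈ D) :
    Rep D μ (cSet c ∩ lU (L.map cSet)) (cVal μ c ⊓ sS (L.map (cVal μ))) := by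
  induction L with
  | nil => simpa using rep_empty
  | cons d L ih =>
      have hd := hL d (List.mem_cons_self)
      have hL' : ∀ e ∈ L, e.1 ∈ D ∧ ∀ F ∈ e.2, F ∈ D :=
        fun e he => hL e (List.mem_cons_of_mem _ he)
      rw [List.map_cons, lU_cons, List.map_cons, sS_cons,
        Set.inter_union_distrib_left, inf_sup_left]
      exact rep_union (rep_cell_inter h hc hd) (ih hL')

lemma rep_inter (h : MuOK D μ) {A B : Set γ} {x y : R} (hA : Rep D μ A x)
    (hB : Rep D μ B y) : Rep D μ (A ∩ B) (x ⊓ y) := by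
  obtain ⟨L₁, hL₁, rfl, rfl⟩ := hA
  obtain ⟨L₂, hL₂, rfl, rfl⟩ := hB
  induction L₁ with
  | nil => simpa using rep_empty
  | cons c L ih =>
      have hc := hL₁ c (List.mem_cons_self)
      have hL' : ∀ e ∈ L, e.1 ∈ D ∧ ∀ F ∈ e.2, F ∈ D :=
        fun e he => hL₁ e (List.mem_cons_of_mem _ he)
      rw [List.map_cons, lU_cons, List.map_cons, sS_cons,
        Set.union_inter_distrib_right, inf_sup_right]
      exact rep_union (rep_cell_inter_list h hc L₂ hL₂) (ih hL')

lemma rep_cell_sdiff_cell (h : MuOK D μ) {c : Set γ × List (Set γ)}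
    (hc : c.1 ∈ D ∧ ∀ F ∈ c.2, F ∈ D) (E' : Set γ) (g : List (Set γ))
    (hE' : E' ∈ D) (hg : ∀ F ∈ g, F ∈ D) :
    Rep D μ (cSet c \ cSet (E', g)) (cVal μ c \ cVal μ (E', g)) := by
  induction g with
  | nil =>
      have hset : cSet c \ cSet (E', ([] : List (Set γ))) = cSet (c.1, c.2 ++ [E']) := by
        show (c.1 \ lU c.2) \ (E' \ lU []) = c.1 \ lU (c.2 ++ [E'])
        rw [lU_append]
        simp only [lU_nil, lU_cons, Set.diff_empty, Set.union_empty]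
        rw [Set.diff_diff]
      have hval : cVal μ c \ cVal μ (E', ([] : List (Set γ))) = cVal μ (c.1, c.2 ++ [E']) := by
        show (μ c.1 \ sS (c.2.map μ)) \ (μ E' \ sS (List.map μ [])) =
          μ c.1 \ sS ((c.2 ++ [E']).map μ)
        rw [List.map_append, sS_append]
        simp only [List.map_nil, sS_nil, List.map_cons, sS_cons, sdiff_bot, sup_bot_eq]
        rw [sdiff_sdiff]
      rw [hset, hval]
      refine ⟨[(c.1, c.2 ++ [E'])], ?_, by simp, by simp⟩
      intro e he; rw [List.mem_singleton] at he; subst he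
      refine ⟨hc.1, fun F hF => ?_⟩
      rcases List.mem_append.1 hF with hF | hF
      · exact hc.2 F hF
      · rw [List.mem_singleton] at hF; subst hF; exact hE'
  | cons G g ih =>
      have hGD : G ∈ D := hg G (List.mem_cons_self)
      have hg' : ∀ F ∈ g, F ∈ D := fun F hF => hg F (List.mem_cons_of_mem _ hF)
      have hset : cSet (E', G :: g) = cSet (E', g) \ G := by
        show E' \ lU (G :: g) = (E' \ lU g) \ G
        rw [lU_cons, Set.diff_diff, Set.union_comm]
      have hval : cVal μ (E', G :: g) = cVal μ (E', g) \ μ G := by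
        show μ E' \ sS ((G :: g).map μ) = (μ E' \ sS (g.map μ)) \ μ G
        rw [List.map_cons, sS_cons, sdiff_sdiff, sup_comm]
      have hset2 : cSet c \ cSet (E', G :: g) =
          (cSet c \ cSet (E', g)) ∪ (cSet c ∩ G) := by
        rw [hset]
        ext x
        simp only [Set.mem_diff, Set.mem_union, Set.mem_inter_iff]
        tauto
      have hval2 : cVal μ c \ cVal μ (E', G :: g) =
          (cVal μ c \ cVal μ (E', g)) ⊔ (cVal μ c ⊓ μ G) := by
        rw [hval, sdiff_sdiff_right']
      rw [hset2, hval2]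
      refine rep_union (ih hg') ?_
      have h2 := rep_cell_inter (d := (G, ([] : List (Set γ)))) h hc ⟨hGD, by simp⟩
      simpa [cSet, cVal] using h2

lemma rep_sdiff_cell (h : MuOK D μ) {A : Set γ} {x : R} (hA : Rep D μ A x)
    {d : Set γ × List (Set γ)} (hd : d.1 ∈ D ∧ ∀ F ∈ d.2, F ∈ D) :
    Rep D μ (A \ cSet d) (x \ cVal μ d) := by
  obtain ⟨L, hL, rfl, rfl⟩ := hA
  induction L with
  | nil => simpa using rep_empty
  | cons c L ih =>
      have hc := hL c (List.mem_cons_self)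
      have hL' : ∀ e ∈ L, e.1 ∈ D ∧ ∀ F ∈ e.2, F ∈ D :=
        fun e he => hL e (List.mem_cons_of_mem _ he)
      rw [List.map_cons, lU_cons, List.map_cons, sS_cons, Set.union_diff_distrib, sup_sdiff]
      exact rep_union (rep_cell_sdiff_cell h hc d.1 d.2 hd.1 hd.2) (ih hL')

lemma rep_sdiff_list (h : MuOK D μ) (L₂ : List (Set γ × List (Set γ)))
    (hL₂ : ∀ e ∈ L₂, e.1 ∈ D ∧ ∀ F ∈ e.2, F ∈ D) :
    ∀ {A : Set γ} {x : R}, Rep D μ A x →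
      Rep D μ (A \ lU (L₂.map cSet)) (x \ sS (L₂.map (cVal μ))) := by
  induction L₂ with
  | nil => intro A x hA; simpa using hA
  | cons d L ih =>
      intro A x hA
      have hd := hL₂ d (List.mem_cons_self)
      have hL' : ∀ e ∈ L, e.1 ∈ D ∧ ∀ F ∈ e.2, F ∈ D :=
        fun e he => hL₂ e (List.mem_cons_of_mem _ he)
      rw [List.map_cons, lU_cons, List.map_cons, sS_cons, ← Set.diff_diff, ← sdiff_sdiff]
      exact ih hL' (rep_sdiff_cell h hA hd)

lemma rep_sdiff (h : MuOK D μ) {A B : Set γ} {x y : R} (hA : Rep D μ A x)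
    (hB : Rep D μ B y) : Rep D μ (A \ B) (x \ y) := by
  obtain ⟨L₂, hL₂, rfl, rfl⟩ := hB
  exact rep_sdiff_list h L₂ hL₂ hA

lemma rep_le (h : MuOK D μ) {A : Set γ} {x y : R} (hx : Rep D μ A x)
    (hy : Rep D μ A y) : x ≤ y := by
  obtain ⟨L, hL, hA, rfl⟩ := hx
  obtain ⟨L', hL', hA', rfl⟩ := hy
  refine sS_le fun a ha => ?_
  obtain ⟨c, hc, rfl⟩ := List.mem_map.1 ha
  have hcsub : cSet c ⊆ lU (L'.map cSet) := by
    rw [← hA', hA]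
    exact subset_lU (List.mem_map.2 ⟨c, hc, rfl⟩)
  exact h.key ((L'.map fun c => c.2.length).sum) c.1 c.2 L' (hL c hc).1 (hL c hc).2 hL'
    le_rfl hcsub

lemma rep_unique (h : MuOK D μ) {A : Set γ} {x y : R} (hx : Rep D μ A x)
    (hy : Rep D μ A y) : x = y :=
  le_antisymm (rep_le h hx hy) (rep_le h hy hx)

section RingLemmas

lemma isSetRingOn_powerset {γ : Type v} (S : Set γ) : IsSetRingOn S {A | A ⊆ S} := by
  refine ⟨⟨by simp, ?_, ?_, ?_⟩, fun E hE => hE⟩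
  · intro E hE F hF; exact Set.union_subset hE hF
  · intro E hE F hF; exact fun x hx => hE hx.1
  · intro E hE F hF; exact fun x hx => hE hx.1

lemma mem_setRingGenOn {γ : Type v} {S : Set γ} {G : Set (Set γ)} {E : Set γ}
    (hE : E ∈ G) : E ∈ setRingGenOn S G :=
  Set.mem_sInter.2 fun _ hR => hR.2 hE

lemma setRingGenOn_subset {γ : Type v} {S : Set γ} {G Rng : Set (Set γ)}
    (hR : IsSetRingOn S Rng) (hG : G ⊆ Rng) : setRingGenOn S G ⊆ Rng :=
  Set.sInter_subset_of_mem ⟨hR, hG⟩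

lemma isSetRingOn_setRingGenOn {γ : Type v} {S : Set γ} {G : Set (Set γ)}
    (hGS : ∀ E ∈ G, E ⊆ S) : IsSetRingOn S (setRingGenOn S G) := by
  constructor
  · refine ⟨?_, ?_, ?_, ?_⟩
    · exact Set.mem_sInter.2 fun R hR => hR.1.1.1
    · intro E hE F hF
      exact Set.mem_sInter.2 fun R hR =>
        hR.1.1.2.1 E (Set.mem_sInter.1 hE R hR) F (Set.mem_sInter.1 hF R hR)
    · intro E hE F hF
      exact Set.mem_sInter.2 fun R hR =>
        hR.1.1.2.2.1 E (Set.mem_sInter.1 hE R hR) F (Set.mem_sInter.1 hF R hR)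
    · intro E hE F hF
      exact Set.mem_sInter.2 fun R hR =>
        hR.1.1.2.2.2 E (Set.mem_sInter.1 hE R hR) F (Set.mem_sInter.1 hF R hR)
  · intro E hE
    exact setRingGenOn_subset (isSetRingOn_powerset S) hGS hE

end RingLemmas

theorem exists_extension {γ : Type v} {R' : Type w} [GeneralizedBooleanAlgebra R']
    {D : Set (Set γ)} {μ : Set γ → R'} (h : MuOK D μ) {S : Set γ}
    (hDS : ∀ E ∈ D, E ⊆ S) :
    ∃ ν : Set γ → R', IsBRHomOn (setRingGenOn S D) ν ∧ ∀ E ∈ D, ν E = μ E := by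
  classical
  have hGoodRing : IsSetRingOn S {A | ∃ x, Rep D μ A x} := by
    refine ⟨⟨⟨⊥, rep_empty⟩, ?_, ?_, ?_⟩, ?_⟩
    · rintro E ⟨x, hx⟩ F ⟨y, hy⟩; exact ⟨x ⊔ y, rep_union hx hy⟩
    · rintro E ⟨x, hx⟩ F ⟨y, hy⟩; exact ⟨x ⊓ y, rep_inter h hx hy⟩
    · rintro E ⟨x, hx⟩ F ⟨y, hy⟩; exact ⟨x \ y, rep_sdiff h hx hy⟩
    · rintro E ⟨x, L, hL, rfl, -⟩
      refine lU_subset fun F hF => ?_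
      obtain ⟨c, hc, rfl⟩ := List.mem_map.1 hF
      exact (show cSet c ⊆ c.1 from Set.diff_subset).trans (hDS c.1 (hL c hc).1)
  have hsub : setRingGenOn S D ⊆ {A | ∃ x, Rep D μ A x} :=
    setRingGenOn_subset hGoodRing (fun E hE => ⟨μ E, rep_gen hE⟩)
  set ν : Set γ → R' := fun A => if hA : ∃ x, Rep D μ A x then hA.choose else ⊥ with hνdef
  have hval : ∀ {A : Set γ} {x : R'}, Rep D μ A x → ν A = x := by
    intro A x hx
    have hA : ∃ x, Rep D μ A x := ⟨x, hx⟩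
    rw [hνdef]
    simp only [dif_pos hA]
    exact rep_unique h hA.choose_spec hx
  refine ⟨ν, ⟨hval rep_empty, ?_, ?_, ?_⟩, fun E hE => hval (rep_gen hE)⟩
  · intro E hE F hF
    obtain ⟨x, hx⟩ := hsub hE
    obtain ⟨y, hy⟩ := hsub hF
    rw [hval hx, hval hy, hval (rep_union hx hy)]
  · intro E hE F hF
    obtain ⟨x, hx⟩ := hsub hE
    obtain ⟨y, hy⟩ := hsub hF
    rw [hval hx, hval hy, hval (rep_inter h hx hy)]
  · intro E hE F hF
    obtain ⟨x, hx⟩ := hsub hE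
    obtain ⟨y, hy⟩ := hsub hF
    rw [hval hx, hval hy, hval (rep_sdiff h hx hy)]

section Zig

variable (C : CategoryOfPaths Λ)

lemma zr_nil {x y : Λ} : zigzagRelIn C Set.univ [] x y ↔ x = y := by
  simp [zigzagRelIn]

lemma zr_single {p : Λ × Λ} {x y : Λ} : zigzagRelIn C Set.univ [p] x y ↔
    C.s p.2 = C.r x ∧ C.s p.1 = C.r y ∧ C.comp p.2 x = C.comp p.1 y := by
  simp only [zigzagRelIn, Set.mem_univ, true_and, and_true]
  constructor
  · rintro ⟨z, rfl, h⟩; exact h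
  · intro h; exact ⟨x, rfl, h⟩

lemma zr_append (l₁ l₂ : List (Λ × Λ)) (x y : Λ) :
    zigzagRelIn C Set.univ (l₁ ++ l₂) x y ↔
      ∃ z, zigzagRelIn C Set.univ l₂ x z ∧ zigzagRelIn C Set.univ l₁ z y := by
  induction l₁ generalizing y with
  | nil =>
      simp only [List.nil_append, zigzagRelIn]
      constructor
      · intro hx; exact ⟨y, hx, rfl, Set.mem_univ _⟩
      · rintro ⟨z, hz, rfl, -⟩; exact hz
  | cons p l ih =>
      simp only [List.cons_append, zigzagRelIn]
      constructor
      · rintro ⟨z, hz, h1, h2, h3, h4⟩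
        obtain ⟨w, hw, hwz⟩ := (ih z).1 hz
        exact ⟨w, hw, z, hwz, h1, h2, h3, h4⟩
      · rintro ⟨w, hw, z, hwz, h1, h2, h3, h4⟩
        exact ⟨z, (ih z).2 ⟨w, hw, hwz⟩, h1, h2, h3, h4⟩

lemma zr_inv (l : List (Λ × Λ)) (x y : Λ) :
    zigzagRelIn C Set.univ (l.reverse.map Prod.swap) y x ↔
      zigzagRelIn C Set.univ l x y := by
  induction l generalizing y with
  | nil => simpa [zigzagRelIn] using eq_comm
  | cons p l ih =>
      have hrw : ((p :: l).reverse.map Prod.swap) =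
          l.reverse.map Prod.swap ++ [p.swap] := by simp
      rw [hrw, zr_append]
      simp only [zigzagRelIn]
      constructor
      · rintro ⟨z, ⟨z₁, ⟨rfl, -⟩, ha, hb, -, hc⟩, hrest⟩
        exact ⟨z, (ih z).1 hrest, hb, ha, Set.mem_univ _, hc.symm⟩
      · rintro ⟨z, hz, h1, h2, h3, h4⟩
        exact ⟨z, ⟨y, ⟨rfl, Set.mem_univ _⟩, h2, h1, Set.mem_univ _, h4.symm⟩, (ih z).2 hz⟩

lemma zr_inj (l : List (Λ × Λ)) (x x' z : Λ)
    (h : zigzagRelIn C Set.univ l x z) (h' : zigzagRelIn C Set.univ l x' z) :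
    x = x' := by
  induction l generalizing z with
  | nil => exact ((zr_nil C).1 h).trans ((zr_nil C).1 h').symm
  | cons p l ih =>
      obtain ⟨w, hw, h1, h2, h3, h4⟩ := h
      obtain ⟨w', hw', h1', h2', h3', h4'⟩ := h'
      have hww : w = w' := C.left_cancel h1 h1' (h4.trans h4'.symm)
      subst hww
      exact ih w hw hw'

lemma zr_rng (l : List (Λ × Λ)) (hl : l ≠ []) (x y : Λ)
    (h : zigzagRelIn C Set.univ l x y) : C.r x = C.s (l.getLast hl).2 := by
  induction l generalizing y with
  | nil => exact absurd rfl hl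
  | cons p l ih =>
      obtain ⟨z, hz, h1, -, -, -⟩ := h
      cases l with
      | nil =>
          have hxz : x = z := (zr_nil C).1 hz
          subst hxz
          exact h1.symm
      | cons q t =>
          rw [List.getLast_cons (List.cons_ne_nil q t)]
          exact ih (List.cons_ne_nil q t) z hz

lemma getLast?_append_some {α : Type*} {l₂ : List α} {b : α}
    (h : l₂.getLast? = some b) (l₁ : List α) : (l₁ ++ l₂).getLast? = some b := by
  rw [List.getLast?_append, h]
  rfl

lemma dom_inter (l₁ l₂ : List (Λ × Λ)) :
    zigzagDomIn C Set.univ l₁ ∩ zigzagDomIn C Set.univ l₂ =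
      zigzagDomIn C Set.univ (l₁ ++ (l₂.reverse.map Prod.swap ++ l₂)) := by
  ext x
  simp only [zigzagDomIn, Set.mem_inter_iff, Set.mem_setOf_eq]
  constructor
  · rintro ⟨⟨y₁, h₁⟩, ⟨y₂, h₂⟩⟩
    refine ⟨y₁, (zr_append C _ _ _ _).2 ⟨x, (zr_append C _ _ _ _).2 ⟨y₂, h₂, ?_⟩, h₁⟩⟩
    exact (zr_inv C l₂ x y₂).2 h₂
  · rintro ⟨y, h⟩
    obtain ⟨z, hz, hy⟩ := (zr_append C _ _ _ _).1 h
    obtain ⟨w, hw, hwz⟩ := (zr_append C _ _ _ _).1 hz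
    have hzw : zigzagRelIn C Set.univ l₂ z w := (zr_inv C l₂ z w).1 hwz
    have hxz : x = z := zr_inj C l₂ x z w hw hzw
    subst hxz
    exact ⟨⟨y, hy⟩, ⟨w, hw⟩⟩

lemma relD0_inter {Λ₀ : Set Λ} {v : Λ} {E F : Set Λ}
    (hE : E ∈ relD0 C Λ₀ Set.univ v) (hF : F ∈ relD0 C Λ₀ Set.univ v)
    (hEF : (E ∩ F).Nonempty) : E ∩ F ∈ relD0 C Λ₀ Set.univ v := by
  obtain ⟨-, l₁, h₁, hz₁, hm₁, hs₁, hE⟩ := hE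
  obtain ⟨-, l₂, h₂, hz₂, hm₂, hs₂, hF⟩ := hF
  subst hE; subst hF
  set L : List (Λ × Λ) := l₁ ++ (l₂.reverse.map Prod.swap ++ l₂) with hLdef
  have hLne : L ≠ [] := by
    rw [hLdef]
    simp [h₁]
  have hinvne : l₂.reverse.map Prod.swap ≠ [] := by simp [h₂]
  refine ⟨hEF, L, hLne, ⟨?_, ?_⟩, ?_, ?_, dom_inter C l₁ l₂⟩
  · -- r p.1 = r p.2 for all entries
    intro p hp
    rw [hLdef] at hp
    rcases List.mem_append.1 hp with hp | hp
    · exact hz₁.1 p hp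
    · rcases List.mem_append.1 hp with hp | hp
      · obtain ⟨q, hq, rfl⟩ := List.mem_map.1 hp
        exact (hz₂.1 q (List.mem_reverse.1 hq)).symm
      · exact hz₂.1 p hp
  · -- chain condition
    rw [hLdef, List.Chain', List.isChain_append]
    refine ⟨hz₁.2, ?_, ?_⟩
    · rw [List.isChain_append]
      refine ⟨?_, hz₂.2, ?_⟩
      · rw [List.isChain_map, List.isChain_reverse]
        exact hz₂.2.imp fun {a b} hab => hab.symm
      · intro p hp q hq
        rw [List.getLast?_map, List.getLast?_reverse] at hp
        cases hq2 : l₂.head? with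
        | none => rw [hq2] at hq; exact absurd hq (by simp)
        | some q' =>
            rw [hq2] at hq
            simp only [Option.mem_def, Option.some.injEq] at hq
            subst hq
            rw [hq2] at hp
            simp only [Option.map_some, Option.mem_def, Option.some.injEq] at hp
            subst hp
            rfl
    · intro p hp q hq
      rw [List.getLast?_eq_getLast h₁] at hp
      simp only [Option.mem_def, Option.some.injEq] at hp
      subst hp
      rw [List.head?_append_of_ne_nil _ hinvne] at hq
      rw [List.head?_map, List.head?_reverse, List.getLast?_eq_getLast h₂] at hq
      simp only [Option.map_some, Option.mem_def, Option.some.injEq] at hq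
      subst hq
      show C.s (l₂.getLast h₂).2 = C.s (l₁.getLast h₁).2
      rw [hs₁, hs₂]
  · -- entries in Λ₀
    intro p hp
    rw [hLdef] at hp
    rcases List.mem_append.1 hp with hp | hp
    · exact hm₁ p hp
    · rcases List.mem_append.1 hp with hp | hp
      · obtain ⟨q, hq, rfl⟩ := List.mem_map.1 hp
        exact ⟨(hm₂ q (List.mem_reverse.1 hq)).2, (hm₂ q (List.mem_reverse.1 hq)).1⟩
      · exact hm₂ p hp
  · -- source
    have hL1 : L.getLast? = some (l₂.getLast h₂) :=
      getLast?_append_some (getLast?_append_some (List.getLast?_eq_getLast h₂) _) _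
    have hL2 : L.getLast? = some (L.getLast hLne) := List.getLast?_eq_getLast _
    have := Option.some.inj (hL2.symm.trans hL1)
    rw [this]
    exact hs₂

lemma relD0_subset {Λ₀ : Set Λ} {v : Λ} {E : Set Λ}
    (hE : E ∈ relD0 C Λ₀ Set.univ v) : E ⊆ {α | α ∈ Set.univ ∧ C.r α = v} := by
  obtain ⟨-, l, hl, -, -, hs, rfl⟩ := hE
  rintro x ⟨y, hy⟩
  exact ⟨Set.mem_univ _, (zr_rng C l hl x y hy).trans hs⟩

end Zig

lemma lU_ofFn {γ : Type v} {n : ℕ} (G : Fin n → Set γ) :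
    lU (List.ofFn G) = ⋃ i, G i := by
  ext x
  simp only [mem_lU, Set.mem_iUnion]
  constructor
  · rintro ⟨F, hF, hx⟩
    obtain ⟨i, rfl⟩ := List.mem_ofFn.1 hF
    exact ⟨i, hx⟩
  · rintro ⟨i, hx⟩
    exact ⟨G i, List.mem_ofFn.2 ⟨i, rfl⟩, hx⟩

lemma sup_eq_sS {γ : Type v} {R' : Type w} [GeneralizedBooleanAlgebra R'] {n : ℕ}
    (G : Fin n → Set γ) (μ : Set γ → R') :
    (Finset.univ.sup fun i => μ (G i)) = sS ((List.ofFn G).map μ) := by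
  apply le_antisymm
  · exact Finset.sup_le fun i _ =>
      le_sS (List.mem_map.2 ⟨G i, List.mem_ofFn.2 ⟨i, rfl⟩, rfl⟩)
  · refine sS_le fun a ha => ?_
    obtain ⟨F, hF, rfl⟩ := List.mem_map.1 ha
    obtain ⟨i, rfl⟩ := List.mem_ofFn.1 hF
    exact Finset.le_sup (f := fun i => μ (G i)) (Finset.mem_univ i)

lemma iUnion_get {γ : Type v} (l : List (Set γ)) : ⋃ i, l.get i = lU l := by
  ext x
  simp only [Set.mem_iUnion, mem_lU]
  constructor
  · rintro ⟨i, hx⟩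
    exact ⟨l.get i, List.get_mem l i, hx⟩
  · rintro ⟨F, hF, hx⟩
    obtain ⟨i, rfl⟩ := List.mem_iff_get.1 hF
    exact ⟨i, hx⟩

lemma sup_get_eq_sS {γ : Type v} {R' : Type w} [GeneralizedBooleanAlgebra R']
    (l : List (Set γ)) (μ : Set γ → R') :
    (Finset.univ.sup fun i : Fin l.length => μ (l.get i)) = sS (l.map μ) := by
  apply le_antisymm
  · exact Finset.sup_le fun i _ =>
      le_sS (List.mem_map.2 ⟨l.get i, List.get_mem l i, rfl⟩)
  · refine sS_le fun a ha => ?_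
    obtain ⟨F, hF, rfl⟩ := List.mem_map.1 ha
    obtain ⟨i, rfl⟩ := List.mem_iff_get.1 hF
    exact Finset.le_sup (f := fun i : Fin l.length => μ (l.get i)) (Finset.mem_univ i)

lemma hom_lU {γ : Type v} {R' : Type w} [GeneralizedBooleanAlgebra R'] {A : Set (Set γ)}
    {ν : Set γ → R'} (hA : IsSetRing A) (hν : IsBRHomOn A ν) :
    ∀ l : List (Set γ), (∀ F ∈ l, F ∈ A) → lU l ∈ A ∧ ν (lU l) = sS (l.map ν) := by
  intro l
  induction l with
  | nil => intro _; exact ⟨hA.1, hν.1⟩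
  | cons F l ih =>
      intro hl
      have hF := hl F (List.mem_cons_self)
      have ih' := ih fun F' hF' => hl F' (List.mem_cons_of_mem _ hF')
      refine ⟨hA.2.1 F hF _ ih'.1, ?_⟩
      show ν (F ∪ lU l) = ν F ⊔ sS (l.map ν)
      rw [hν.2.1 F hF _ ih'.1, ih'.2]

end St7


/-- Theorem 5.1. A map `μ : 𝒟(Λ₀,Λ)⁰_v → R` extends to a
Boolean ring homomorphism `𝒜(Λ₀,Λ)_v → R` iff it respects intersections and
finite covers of generators, and the extension is unique. -/
theorem statement7 {Λ : Type u} (C : CategoryOfPaths Λ) (Λ₀ : Set Λ)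
    (hsub : IsSubcategory C Λ₀) (v : Λ) (hv0 : v ∈ Λ₀) (hv : C.r v = v)
    {R : Type*} [GeneralizedBooleanAlgebra R] (μ : Set Λ → R) :
    ((∃ ν : Set Λ → R, IsBRHomOn (relAring C Λ₀ Set.univ v) ν ∧
        ∀ E ∈ relD0 C Λ₀ Set.univ v, ν E = μ E) ↔
      ((∀ E ∈ relD0 C Λ₀ Set.univ v, ∀ F ∈ relD0 C Λ₀ Set.univ v,
          ((E ∩ F).Nonempty →
            E ∩ F ∈ relD0 C Λ₀ Set.univ v ∧ μ (E ∩ F) = μ E ⊓ μ F) ∧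
          (E ∩ F = ∅ → μ E ⊓ μ F = ⊥)) ∧
        (∀ E ∈ relD0 C Λ₀ Set.univ v, ∀ (n : ℕ) (G : Fin n → Set Λ),
          (∀ i, G i ∈ relD0 C Λ₀ Set.univ v) → E = ⋃ i, G i →
          μ E = Finset.univ.sup fun i => μ (G i)))) ∧
    (∀ ν₁ ν₂ : Set Λ → R, IsBRHomOn (relAring C Λ₀ Set.univ v) ν₁ →
      IsBRHomOn (relAring C Λ₀ Set.univ v) ν₂ →
      (∀ E ∈ relD0 C Λ₀ Set.univ v, ν₁ E = μ E) →
      (∀ E ∈ relD0 C Λ₀ Set.univ v, ν₂ E = μ E) →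
      ∀ E ∈ relAring C Λ₀ Set.univ v, ν₁ E = ν₂ E) := by
  classical
  have hDS : ∀ E ∈ relD0 C Λ₀ Set.univ v, E ⊆ {α : Λ | α ∈ Set.univ ∧ C.r α = v} :=
    fun E hE => St7.relD0_subset C hE
  have hring : IsSetRingOn {α : Λ | α ∈ Set.univ ∧ C.r α = v} (relAring C Λ₀ Set.univ v) :=
    St7.isSetRingOn_setRingGenOn hDS
  constructor
  · constructor
    · -- forward direction
      rintro ⟨ν, hν, hext⟩
      constructor
      · intro E hE F hF
        have hE' : E ∈ relAring C Λ₀ Set.univ v := St7.mem_setRingGenOn hE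
        have hF' : F ∈ relAring C Λ₀ Set.univ v := St7.mem_setRingGenOn hF
        constructor
        · intro hne
          have hmem := St7.relD0_inter C hE hF hne
          refine ⟨hmem, ?_⟩
          rw [← hext _ hmem, ← hext _ hE, ← hext _ hF]
          exact hν.2.2.1 E hE' F hF'
        · intro hempty
          rw [← hext _ hE, ← hext _ hF, ← hν.2.2.1 E hE' F hF', hempty, hν.1]
      · intro E hE n G hG hEG
        have hmem : ∀ F ∈ List.ofFn G, F ∈ relAring C Λ₀ Set.univ v := by
          intro F hF
          obtain ⟨i, rfl⟩ := List.mem_ofFn.1 hF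
          exact St7.mem_setRingGenOn (hG i)
        have hkey := St7.hom_lU hring.1 hν (List.ofFn G) hmem
        have hE2 : E = St7.lU (List.ofFn G) := by rw [St7.lU_ofFn]; exact hEG
        have hmap : (List.ofFn G).map ν = (List.ofFn G).map μ :=
          List.map_congr_left fun F hF => by
            obtain ⟨i, rfl⟩ := List.mem_ofFn.1 hF
            exact hext _ (hG i)
        rw [← hext E hE, hE2, hkey.2, hmap, ← St7.sup_eq_sS]
    · -- backward direction
      rintro ⟨h1, h2⟩
      have hMu : St7.MuOK (relD0 C Λ₀ Set.univ v) μ :=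
        ⟨fun E hE F hF hne => (h1 E hE F hF).1 hne,
         fun E hE F hF hem => (h1 E hE F hF).2 hem,
         fun E hE l hl hEl => by
           have hcov : E = ⋃ i, l.get i := by rw [St7.iUnion_get]; exact hEl
           rw [h2 E hE l.length l.get (fun i => hl _ (List.get_mem l i)) hcov,
             St7.sup_get_eq_sS]⟩
      exact St7.exists_extension hMu hDS
  · -- uniqueness
    intro ν₁ ν₂ hν₁ hν₂ h₁ h₂
    have hT : IsSetRingOn {α : Λ | α ∈ Set.univ ∧ C.r α = v}
        {E | E ∈ relAring C Λ₀ Set.univ v ∧ ν₁ E = ν₂ E} := by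
      refine ⟨⟨⟨hring.1.1, hν₁.1.trans hν₂.1.symm⟩, ?_, ?_, ?_⟩, fun E hE => hring.2 E hE.1⟩
      · intro E hE F hF
        exact ⟨hring.1.2.1 _ hE.1 _ hF.1, by
          rw [hν₁.2.1 _ hE.1 _ hF.1, hν₂.2.1 _ hE.1 _ hF.1, hE.2, hF.2]⟩
      · intro E hE F hF
        exact ⟨hring.1.2.2.1 _ hE.1 _ hF.1, by
          rw [hν₁.2.2.1 _ hE.1 _ hF.1, hν₂.2.2.1 _ hE.1 _ hF.1, hE.2, hF.2]⟩
      · intro E hE F hF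
        exact ⟨hring.1.2.2.2 _ hE.1 _ hF.1, by
          rw [hν₁.2.2.2 _ hE.1 _ hF.1, hν₂.2.2.2 _ hE.1 _ hF.1, hE.2, hF.2]⟩
    have hDT : relD0 C Λ₀ Set.univ v ⊆
        {E | E ∈ relAring C Λ₀ Set.univ v ∧ ν₁ E = ν₂ E} :=
      fun E hE => ⟨St7.mem_setRingGenOn hE, (h₁ E hE).trans (h₂ E hE).symm⟩
    intro E hE
    exact ((St7.setRingGenOn_subset hT hDT) hE).2
end

section
/- Let Λ be a finitely aligned category of paths, v a vertex, R a generalized Boolean algebra, and μ : vΛ → R. Then there exists a Boolean ring homomorphism μ̄ : 𝒜_v → R with μ̄(αΛ) = μ(α) for all α ∈ vΛ if and only if μ(α) ⊓ μ(β) = ⨆_{ε ∈ α∨β} μ(ε) for all α, β ∈ vΛ (the supremum over the finite set α ∨ β, equal to ⊥ when α ∨ β = ∅). In this case μ̄ is unique. -/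
universe u v

variable {Λ : Type u}

section Statement8Aux

theorem s8_mem_pTail_self (C : CategoryOfPaths Λ) (α : Λ) : α ∈ pTail C α :=
  ⟨C.s α, (C.r_s α).symm, (C.comp_id α).symm⟩

theorem s8_r_of_mem {C : CategoryOfPaths Λ} {α x : Λ} (h : x ∈ pTail C α) :
    C.r x = C.r α := by
  obtain ⟨β, h1, rfl⟩ := h
  exact C.r_comp h1

theorem s8_pTail_trans {C : CategoryOfPaths Λ} {α x : Λ} (h : x ∈ pTail C α) :
    pTail C x ⊆ pTail C α := by
  obtain ⟨β, h1, rfl⟩ := h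
  rintro y ⟨δ, hδ, rfl⟩
  have h2 : C.s β = C.r δ := by rw [← C.s_comp h1]; exact hδ
  refine ⟨C.comp β δ, ?_, ?_⟩
  · rw [C.r_comp h2]; exact h1
  · rw [C.comp_assoc h1 h2]

theorem s8_antisymm {C : CategoryOfPaths Λ} {α β : Λ}
    (h1 : α ∈ pTail C β) (h2 : β ∈ pTail C α) : α = β := by
  obtain ⟨b, hb, hab⟩ := h1
  obtain ⟨a, ha, hba⟩ := h2
  have hsb : C.s b = C.r a := by
    have h : C.s α = C.s b := by rw [hab]; exact C.s_comp hb
    rw [← h]; exact ha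
  have hβ2 : β = C.comp β (C.comp b a) := by
    rw [← C.comp_assoc hb hsb, ← hab, ← hba]
  have hcomp : C.comp b a = C.s β := by
    have h3 : C.s β = C.r (C.comp b a) := by rw [C.r_comp hsb]; exact hb
    have h4 : C.s β = C.r (C.s β) := (C.r_s β).symm
    apply C.left_cancel h3 h4
    rw [← hβ2, C.comp_id]
  have hsa : C.s a = C.s β := by rw [hba, C.s_comp ha]
  have hni := C.no_inverses hsb (by rw [hcomp, ← hsa])
  rw [hab, hni.1, hsa, C.comp_id]

theorem s8_exists_min (C : CategoryOfPaths Λ) {H : Set Λ} (hfin : H.Finite)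
    (hne : H.Nonempty) : ∃ ε ∈ H, ∀ z ∈ H, ε ∈ pTail C z → z = ε := by
  letI : PartialOrder Λ :=
    { le := fun x y => y ∈ pTail C x
      le_refl := fun x => s8_mem_pTail_self C x
      le_trans := fun x y z h1 h2 => s8_pTail_trans h1 h2
      le_antisymm := fun x y h1 h2 => s8_antisymm h2 h1 }
  obtain ⟨a, haH, hmin⟩ := Set.Finite.exists_minimalFor id H hfin hne
  exact ⟨a, haH, fun z hz hle => s8_antisymm (α := z) (β := a) (hmin hz hle) hle⟩

theorem s8_mem_pMinCE {C : CategoryOfPaths Λ} {α β ε : Λ} :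
    ε ∈ pMinCE C α β ↔ (ε ∈ pTail C α ∧ ε ∈ pTail C β) ∧
      ∀ γ, γ ∈ pTail C α → γ ∈ pTail C β → ε ∈ pTail C γ → γ = ε := by
  unfold pMinCE pMinExt
  simp only [Set.mem_setOf_eq, Set.mem_insert_iff, Set.mem_singleton_iff,
    forall_eq_or_imp, forall_eq]
  tauto

theorem s8_self_mem_pMinCE {C : CategoryOfPaths Λ} {α β : Λ} (h : α ∈ pTail C β) :
    α ∈ pMinCE C α β := by
  rw [s8_mem_pMinCE]
  exact ⟨⟨s8_mem_pTail_self C α, h⟩, fun γ h1 _ h2 => s8_antisymm h1 h2⟩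

theorem s8_pMinCE_spec {C : CategoryOfPaths Λ} (hfa : FinitelyAligned C) (α β : Λ) :
    (pMinCE C α β).Finite ∧
      pTail C α ∩ pTail C β = ⋃ ε ∈ pMinCE C α β, pTail C ε := by
  obtain ⟨G, hGfin, hG⟩ := hfa α β
  have hGsub : ∀ ε ∈ G, ε ∈ pTail C α ∩ pTail C β := by
    intro ε hε
    rw [hG]
    exact Set.mem_biUnion hε (s8_mem_pTail_self C ε)
  have hsub : pMinCE C α β ⊆ G := by
    intro ε hε
    rw [s8_mem_pMinCE] at hε
    have h1 : ε ∈ pTail C α ∩ pTail C β := ⟨hε.1.1, hε.1.2⟩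
    rw [hG] at h1
    obtain ⟨ε', hε'G, hεmem⟩ := Set.mem_iUnion₂.mp h1
    have h2 := hGsub ε' hε'G
    have h3 : ε' = ε := hε.2 ε' h2.1 h2.2 hεmem
    rwa [← h3]
  refine ⟨hGfin.subset hsub, ?_⟩
  apply Set.Subset.antisymm
  · intro δ hδ
    have hδG : δ ∈ ⋃ ε ∈ G, pTail C ε := by rw [← hG]; exact hδ
    have hHfin : {ε | ε ∈ G ∧ δ ∈ pTail C ε}.Finite :=
      hGfin.subset (fun x hx => hx.1)
    have hHne : {ε | ε ∈ G ∧ δ ∈ pTail C ε}.Nonempty := by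
      obtain ⟨ε', h1, h2⟩ := Set.mem_iUnion₂.mp hδG
      exact ⟨ε', h1, h2⟩
    obtain ⟨ε₀, hε₀H, hε₀min⟩ := s8_exists_min C hHfin hHne
    have hε₀CE := hGsub ε₀ hε₀H.1
    have hε₀MCE : ε₀ ∈ pMinCE C α β := by
      rw [s8_mem_pMinCE]
      refine ⟨⟨hε₀CE.1, hε₀CE.2⟩, ?_⟩
      intro γ hγα hγβ hεγ
      have hγ1 : γ ∈ ⋃ ε ∈ G, pTail C ε := by rw [← hG]; exact ⟨hγα, hγβ⟩
      obtain ⟨ε₁, hε₁G, hγε₁⟩ := Set.mem_iUnion₂.mp hγ1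
      have hδε₁ : δ ∈ pTail C ε₁ :=
        s8_pTail_trans hγε₁ (s8_pTail_trans hεγ hε₀H.2)
      have hε₁eq : ε₁ = ε₀ :=
        hε₀min ε₁ ⟨hε₁G, hδε₁⟩ (s8_pTail_trans hγε₁ hεγ)
      exact s8_antisymm (hε₁eq ▸ hγε₁) hεγ
    exact Set.mem_biUnion hε₀MCE hε₀H.2
  · intro δ hδ
    obtain ⟨ε, hεM, hδε⟩ := Set.mem_iUnion₂.mp hδ
    have h := (s8_mem_pMinCE.mp hεM).1
    exact ⟨s8_pTail_trans h.1 hδε, s8_pTail_trans h.2 hδε⟩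


/-- Formal Boolean expressions over paths. -/
inductive PE (Λ : Type u) : Type u where
  | base (α : Λ) : PE Λ
  | pbot : PE Λ
  | psup (a b : PE Λ) : PE Λ
  | pinf (a b : PE Λ) : PE Λ
  | pdiff (a b : PE Λ) : PE Λ

namespace PE

def sets (C : CategoryOfPaths Λ) : PE Λ → Set Λ
  | base α => pTail C α
  | pbot => ∅
  | psup a b => a.sets C ∪ b.sets C
  | pinf a b => a.sets C ∩ b.sets C
  | pdiff a b => a.sets C \ b.sets C

def val {R : Type*} [GeneralizedBooleanAlgebra R] (μ : Λ → R) : PE Λ → R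
  | base α => μ α
  | pbot => ⊥
  | psup a b => a.val μ ⊔ b.val μ
  | pinf a b => a.val μ ⊓ b.val μ
  | pdiff a b => a.val μ \ b.val μ

def Good (C : CategoryOfPaths Λ) (v : Λ) : PE Λ → Prop
  | base α => C.r α = v
  | pbot => True
  | psup a b => a.Good C v ∧ b.Good C v
  | pinf a b => a.Good C v ∧ b.Good C v
  | pdiff a b => a.Good C v ∧ b.Good C v

def sz : PE Λ → ℕ
  | base _ => 1
  | pbot => 1
  | psup a b => a.sz + b.sz + 1
  | pinf a b => a.sz + b.sz + 1
  | pdiff a b => a.sz + b.sz + 1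

theorem sz_pos (e : PE Λ) : 1 ≤ e.sz := by
  cases e <;> simp [sz]

theorem good_sets_subset {C : CategoryOfPaths Λ} {v : Λ} :
    ∀ {e : PE Λ}, e.Good C v → e.sets C ⊆ pRng C v
  | base α, h => fun x hx => by
      have := s8_r_of_mem hx
      simp only [pRng, Set.mem_setOf_eq]
      rw [this, h]
  | pbot, _ => by simp [sets]
  | psup a b, h => by
      simpa [sets] using Set.union_subset (good_sets_subset h.1) (good_sets_subset h.2)
  | pinf a b, h => fun x hx => good_sets_subset h.1 hx.1
  | pdiff a b, h => fun x hx => good_sets_subset h.1 hx.1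

end PE

section Folds

variable {R : Type v} [GeneralizedBooleanAlgebra R]

def s8iR (μ : Λ → R) (x : R) (A : List (PE Λ)) : R :=
  A.foldr (fun e t => e.val μ ⊓ t) x

def s8sR (μ : Λ → R) (x : R) (B : List (PE Λ)) : R :=
  B.foldr (fun e t => e.val μ ⊔ t) x

def s8pR (μ : Λ → R) (x : R) (l : List Λ) : R :=
  l.foldr (fun β t => μ β ⊔ t) x

def s8iS (C : CategoryOfPaths Λ) (s : Set Λ) (A : List (PE Λ)) : Set Λ :=
  A.foldr (fun e t => e.sets C ∩ t) s

def s8sS (C : CategoryOfPaths Λ) (s : Set Λ) (B : List (PE Λ)) : Set Λ :=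
  B.foldr (fun e t => e.sets C ∪ t) s

def s8pS (C : CategoryOfPaths Λ) (s : Set Λ) (l : List Λ) : Set Λ :=
  l.foldr (fun β t => pTail C β ∪ t) s

@[simp] theorem s8iR_nil (μ : Λ → R) (x : R) : s8iR μ x [] = x := rfl
@[simp] theorem s8iR_cons (μ : Λ → R) (x : R) (e : PE Λ) (A : List (PE Λ)) :
    s8iR μ x (e :: A) = e.val μ ⊓ s8iR μ x A := rfl
@[simp] theorem s8sR_nil (μ : Λ → R) (x : R) : s8sR μ x [] = x := rfl
@[simp] theorem s8sR_cons (μ : Λ → R) (x : R) (e : PE Λ) (B : List (PE Λ)) :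
    s8sR μ x (e :: B) = e.val μ ⊔ s8sR μ x B := rfl
@[simp] theorem s8pR_nil (μ : Λ → R) (x : R) : s8pR μ x [] = x := rfl
@[simp] theorem s8pR_cons (μ : Λ → R) (x : R) (β : Λ) (l : List Λ) :
    s8pR μ x (β :: l) = μ β ⊔ s8pR μ x l := rfl
@[simp] theorem s8iS_nil (C : CategoryOfPaths Λ) (s : Set Λ) : s8iS C s [] = s := rfl
@[simp] theorem s8iS_cons (C : CategoryOfPaths Λ) (s : Set Λ) (e : PE Λ) (A : List (PE Λ)) :
    s8iS C s (e :: A) = e.sets C ∩ s8iS C s A := rfl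
@[simp] theorem s8sS_nil (C : CategoryOfPaths Λ) (s : Set Λ) : s8sS C s [] = s := rfl
@[simp] theorem s8sS_cons (C : CategoryOfPaths Λ) (s : Set Λ) (e : PE Λ) (B : List (PE Λ)) :
    s8sS C s (e :: B) = e.sets C ∪ s8sS C s B := rfl
@[simp] theorem s8pS_nil (C : CategoryOfPaths Λ) (s : Set Λ) : s8pS C s [] = s := rfl
@[simp] theorem s8pS_cons (C : CategoryOfPaths Λ) (s : Set Λ) (β : Λ) (l : List Λ) :
    s8pS C s (β :: l) = pTail C β ∪ s8pS C s l := rfl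

theorem s8iR_inf (μ : Λ → R) (x y : R) (A : List (PE Λ)) :
    s8iR μ (x ⊓ y) A = x ⊓ s8iR μ y A := by
  induction A with
  | nil => rfl
  | cons e A ih => simp [ih, inf_left_comm]

theorem s8iR_le (μ : Λ → R) (x : R) (A : List (PE Λ)) : s8iR μ x A ≤ x := by
  induction A with
  | nil => exact le_rfl
  | cons e A ih => exact inf_le_right.trans ih

theorem s8pR_sup (μ : Λ → R) (x y : R) (l : List Λ) :
    s8pR μ (x ⊔ y) l = x ⊔ s8pR μ y l := by
  induction l with
  | nil => rfl
  | cons β l ih => simp [ih, sup_left_comm]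

theorem s8le_pR (μ : Λ → R) (x : R) (l : List Λ) {β : Λ} (h : β ∈ l) :
    μ β ≤ s8pR μ x l := by
  induction l with
  | nil => simp at h
  | cons b l ih =>
    rcases List.mem_cons.mp h with rfl | h
    · exact le_sup_left
    · exact (ih h).trans le_sup_right

theorem s8inf_pR_le (μ : Λ → R) (x c : R) (l : List Λ)
    (h : ∀ β ∈ l, x ⊓ μ β ≤ c) : x ⊓ s8pR μ ⊥ l ≤ c := by
  induction l with
  | nil => simp
  | cons b l ih =>
    rw [s8pR_cons, inf_sup_left]
    exact sup_le (h b (List.mem_cons_self)) (ih fun β hβ => h β (List.mem_cons_of_mem b hβ))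

theorem s8mem_iS {C : CategoryOfPaths Λ} {s : Set Λ} {A : List (PE Λ)} {x : Λ} :
    x ∈ s8iS C s A ↔ x ∈ s ∧ ∀ e ∈ A, x ∈ e.sets C := by
  induction A with
  | nil => simp
  | cons e A ih =>
    rw [s8iS_cons]
    simp only [Set.mem_inter_iff, ih, List.mem_cons]
    constructor
    · rintro ⟨h1, h2, h3⟩
      exact ⟨h2, fun f hf => by rcases hf with rfl | hf; exact h1; exact h3 f hf⟩
    · rintro ⟨h1, h2⟩
      exact ⟨h2 e (Or.inl rfl), h1, fun f hf => h2 f (Or.inr hf)⟩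

theorem s8mem_sS {C : CategoryOfPaths Λ} {s : Set Λ} {B : List (PE Λ)} {x : Λ} :
    x ∈ s8sS C s B ↔ x ∈ s ∨ ∃ e ∈ B, x ∈ e.sets C := by
  induction B with
  | nil => simp
  | cons e B ih =>
    rw [s8sS_cons]
    simp only [Set.mem_union, ih, List.mem_cons]
    constructor
    · rintro (h | h | ⟨f, hf, hx⟩)
      · exact Or.inr ⟨e, Or.inl rfl, h⟩
      · exact Or.inl h
      · exact Or.inr ⟨f, Or.inr hf, hx⟩
    · rintro (h | ⟨f, rfl | hf, hx⟩)
      · exact Or.inr (Or.inl h)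
      · exact Or.inl hx
      · exact Or.inr (Or.inr ⟨f, hf, hx⟩)

theorem s8mem_pS {C : CategoryOfPaths Λ} {s : Set Λ} {l : List Λ} {x : Λ} :
    x ∈ s8pS C s l ↔ x ∈ s ∨ ∃ β ∈ l, x ∈ pTail C β := by
  induction l with
  | nil => simp
  | cons b l ih =>
    rw [s8pS_cons]
    simp only [Set.mem_union, ih, List.mem_cons]
    constructor
    · rintro (h | h | ⟨f, hf, hx⟩)
      · exact Or.inr ⟨b, Or.inl rfl, h⟩
      · exact Or.inl h
      · exact Or.inr ⟨f, Or.inr hf, hx⟩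
    · rintro (h | ⟨f, rfl | hf, hx⟩)
      · exact Or.inr (Or.inl h)
      · exact Or.inl hx
      · exact Or.inr (Or.inr ⟨f, hf, hx⟩)

/- Generalized Boolean algebra identities. -/

theorem s8I1 (a b c : R) : (a \ b) ⊓ c = (a ⊓ c) \ b := by
  rw [sdiff_inf_right_comm]

theorem s8I3 (x r a b : R) :
    x \ (r ⊔ (a \ b)) ≤ (x \ (r ⊔ a)) ⊔ ((x ⊓ b) \ r) := by
  have h1 : (x \ (r ⊔ (a \ b))) ⊓ b ≤ (x ⊓ b) \ r := by
    rw [s8I1]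
    exact sdiff_le_sdiff_left le_sup_left
  have h2 : (x \ (r ⊔ (a \ b))) \ b ≤ x \ (r ⊔ a) := by
    rw [sdiff_sdiff_left]
    refine sdiff_le_sdiff_left ?_
    rw [sup_assoc]
    refine sup_le_sup_left ?_ r
    rw [sdiff_sup_self]
    exact le_sup_left
  calc x \ (r ⊔ (a \ b)) = (x \ (r ⊔ (a \ b))) ⊓ b ⊔ (x \ (r ⊔ (a \ b))) \ b :=
        (sup_inf_sdiff _ _).symm
    _ ≤ (x ⊓ b) \ r ⊔ x \ (r ⊔ a) := sup_le_sup h1 h2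
    _ = (x \ (r ⊔ a)) ⊔ ((x ⊓ b) \ r) := sup_comm _ _

theorem s8I4 (x r c : R) : x \ r ≤ (x \ (r ⊔ c)) ⊔ c := by
  rw [← sdiff_sdiff_left]
  calc x \ r ≤ c ⊔ (x \ r) \ c := le_sup_sdiff
    _ = ((x \ r) \ c) ⊔ c := sup_comm _ _

theorem s8le_sdiff {a b c : R} (h1 : a ≤ b) (h2 : a ⊓ c = ⊥) : a ≤ b \ c := by
  have hd : Disjoint a c := disjoint_iff.mpr h2
  rw [← hd.sdiff_eq_left]
  exact sdiff_le_sdiff_right h1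

end Folds

section Master

variable {R : Type v} [GeneralizedBooleanAlgebra R]

theorem s8master (C : CategoryOfPaths Λ) (v : Λ) (μ : Λ → R)
    (hmono : ∀ γ β : Λ, C.r γ = v → C.r β = v → γ ∈ pTail C β → μ γ ≤ μ β)
    (hkey : ∀ γ α : Λ, C.r γ = v → C.r α = v → ∃ F : Finset Λ,
      (∀ ε ∈ F, C.r ε = v ∧ ε ∈ pTail C γ ∧ ε ∈ pTail C α) ∧ μ γ ⊓ μ α = F.sup μ) :
    ∀ (n : ℕ) (γ : Λ) (A Bx : List (PE Λ)) (βs : List Λ) (d : PE Λ),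
      (A.map PE.sz).sum + (Bx.map PE.sz).sum + d.sz ≤ n →
      C.r γ = v → (∀ e ∈ A, e.Good C v) → (∀ e ∈ Bx, e.Good C v) →
      (∀ β ∈ βs, C.r β = v) → d.Good C v →
      s8iS C (pTail C γ) A \ s8pS C (s8sS C ∅ Bx) βs ⊆ d.sets C →
      s8iR μ (μ γ) A \ s8pR μ (s8sR μ ⊥ Bx) βs ≤ d.val μ := by
  intro n
  induction n with
  | zero =>
    intro γ A Bx βs d hsz _ _ _ _ _ _
    exact absurd hsz (by have := PE.sz_pos d; omega)
  | succ n ih =>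
    intro γ A Bx βs d hsz hγ hA hBx hβs hd hsub
    rcases A with _ | ⟨e, A'⟩
    case cons =>
      have hA' : ∀ f ∈ A', f.Good C v := fun f hf => hA f (List.mem_cons_of_mem _ hf)
      have he : e.Good C v := hA e (List.mem_cons_self)
      cases e with
      | pbot =>
        rw [s8iR_cons]
        simp [PE.val]
      | base α =>
        have hα : C.r α = v := he
        obtain ⟨F, hF1, hF3⟩ := hkey γ α hγ hα
        have hle : s8iR μ (μ γ) A' ≤ μ γ := s8iR_le μ _ A'
        have e1 : (μ γ ⊓ μ α) ⊓ s8iR μ (μ γ) A' = μ α ⊓ s8iR μ (μ γ) A' := by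
          rw [inf_assoc, inf_left_comm, inf_eq_right.mpr hle]
        rw [s8iR_cons]
        simp only [PE.val]
        rw [← e1, hF3, sdiff_le_iff, inf_comm, Finset.sup_inf_distrib_left]
        apply Finset.sup_le
        intro ε hεF
        obtain ⟨hεv, hεγ, hεα⟩ := hF1 ε hεF
        have hεle : μ ε ≤ μ γ := by
          calc μ ε ≤ F.sup μ := Finset.le_sup hεF
            _ = μ γ ⊓ μ α := hF3.symm
            _ ≤ μ γ := inf_le_left
        have e2 : s8iR μ (μ γ) A' ⊓ μ ε = s8iR μ (μ ε) A' := by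
          rw [inf_comm, ← inf_eq_left.mpr hεle, s8iR_inf, inf_assoc,
            inf_eq_right.mpr hle]
        rw [e2, ← sdiff_le_iff]
        apply ih ε A' Bx βs d
        · simp only [List.map_cons, List.sum_cons, PE.sz] at hsz ⊢; omega
        · exact hεv
        · exact hA'
        · exact hBx
        · exact hβs
        · exact hd
        · intro z hz
          apply hsub
          obtain ⟨hz1, hz2⟩ := hz
          rw [s8mem_iS] at hz1
          refine ⟨?_, hz2⟩
          rw [s8iS_cons]
          refine ⟨s8_pTail_trans hεα hz1.1, ?_⟩
          rw [s8mem_iS]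
          exact ⟨s8_pTail_trans hεγ hz1.1, hz1.2⟩
      | psup x y =>
        obtain ⟨hx, hy⟩ := he
        rw [s8iR_cons]
        simp only [PE.val]
        rw [inf_sup_right, sup_sdiff]
        apply sup_le
        · refine ih γ (x :: A') Bx βs d ?_ hγ ?_ hBx hβs hd ?_
          · simp only [List.map_cons, List.sum_cons, PE.sz] at hsz ⊢; omega
          · intro f hf
            rcases List.mem_cons.mp hf with rfl | hf
            · exact hx
            · exact hA' f hf
          · intro z hz
            apply hsub
            obtain ⟨hz1, hz2⟩ := hz
            rw [s8iS_cons] at hz1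
            exact ⟨⟨Or.inl hz1.1, hz1.2⟩, hz2⟩
        · refine ih γ (y :: A') Bx βs d ?_ hγ ?_ hBx hβs hd ?_
          · simp only [List.map_cons, List.sum_cons, PE.sz] at hsz ⊢; omega
          · intro f hf
            rcases List.mem_cons.mp hf with rfl | hf
            · exact hy
            · exact hA' f hf
          · intro z hz
            apply hsub
            obtain ⟨hz1, hz2⟩ := hz
            rw [s8iS_cons] at hz1
            exact ⟨⟨Or.inr hz1.1, hz1.2⟩, hz2⟩
      | pinf x y =>
        obtain ⟨hx, hy⟩ := he
        rw [s8iR_cons]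
        simp only [PE.val]
        rw [inf_assoc]
        refine ih γ (x :: y :: A') Bx βs d ?_ hγ ?_ hBx hβs hd ?_
        · simp only [List.map_cons, List.sum_cons, PE.sz] at hsz ⊢; omega
        · intro f hf
          rcases List.mem_cons.mp hf with rfl | hf
          · exact hx
          rcases List.mem_cons.mp hf with rfl | hf
          · exact hy
          · exact hA' f hf
        · intro z hz
          apply hsub
          obtain ⟨hz1, hz2⟩ := hz
          rw [s8iS_cons] at hz1
          obtain ⟨hzx, hz1⟩ := hz1
          rw [s8iS_cons] at hz1
          exact ⟨⟨⟨hzx, hz1.1⟩, hz1.2⟩, hz2⟩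
      | pdiff x y =>
        obtain ⟨hx, hy⟩ := he
        rw [s8iR_cons]
        simp only [PE.val]
        rw [s8I1, sdiff_sdiff_left]
        have hcall := ih γ (x :: A') (y :: Bx) βs d ?_ hγ ?_ ?_ hβs hd ?_
        · rw [s8iR_cons, s8sR_cons, s8pR_sup] at hcall
          exact hcall
        · simp only [List.map_cons, List.sum_cons, PE.sz] at hsz ⊢; omega
        · intro f hf
          rcases List.mem_cons.mp hf with rfl | hf
          · exact hx
          · exact hA' f hf
        · intro f hf
          rcases List.mem_cons.mp hf with rfl | hf
          · exact hy
          · exact hBx f hf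
        · intro z hz
          apply hsub
          obtain ⟨hz1, hz2⟩ := hz
          rw [s8iS_cons] at hz1
          rw [s8mem_pS, s8mem_sS] at hz2
          push_neg at hz2
          obtain ⟨⟨-, hz2⟩, hz3⟩ := hz2
          constructor
          · rw [s8iS_cons]
            refine ⟨⟨hz1.1, ?_⟩, hz1.2⟩
            exact hz2 y (List.mem_cons_self)
          · rw [s8mem_pS, s8mem_sS]
            push_neg
            refine ⟨⟨Set.notMem_empty z, ?_⟩, hz3⟩
            exact fun f hf => hz2 f (List.mem_cons_of_mem _ hf)
    case nil =>
      rcases Bx with _ | ⟨e, Bx'⟩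
      case cons =>
        have hBx' : ∀ f ∈ Bx', f.Good C v := fun f hf => hBx f (List.mem_cons_of_mem _ hf)
        have he : e.Good C v := hBx e (List.mem_cons_self)
        cases e with
        | pbot =>
          have hcall := ih γ [] Bx' βs d ?_ hγ (by simp) hBx' hβs hd ?_
          · rw [s8sR_cons]
            simpa [PE.val] using hcall
          · simp only [List.map_cons, List.sum_cons, PE.sz] at hsz ⊢; omega
          · intro z hz
            apply hsub
            obtain ⟨hz1, hz2⟩ := hz
            refine ⟨hz1, ?_⟩
            rw [s8mem_pS, s8mem_sS] at hz2 ⊢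
            push_neg at hz2 ⊢
            obtain ⟨⟨-, hz2⟩, hz3⟩ := hz2
            refine ⟨⟨Set.notMem_empty z, ?_⟩, hz3⟩
            intro f hf
            rcases List.mem_cons.mp hf with rfl | hf
            · simp [PE.sets]
            · exact hz2 f hf
        | base β =>
          have hβ : C.r β = v := he
          have hcall := ih γ [] Bx' (β :: βs) d ?_ hγ (by simp) hBx' ?_ hd ?_
          · rw [s8sR_cons, s8pR_sup]
            simpa only [PE.val, s8pR_cons] using hcall
          · simp only [List.map_cons, List.sum_cons, PE.sz] at hsz ⊢; omega
          · intro b hb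
            rcases List.mem_cons.mp hb with rfl | hb
            · exact hβ
            · exact hβs b hb
          · intro z hz
            apply hsub
            obtain ⟨hz1, hz2⟩ := hz
            refine ⟨hz1, ?_⟩
            rw [s8mem_pS, s8mem_sS] at hz2 ⊢
            push_neg at hz2 ⊢
            obtain ⟨⟨-, hz2⟩, hz3⟩ := hz2
            have hzβ : z ∉ pTail C β := hz3 β (List.mem_cons_self)
            refine ⟨⟨Set.notMem_empty z, ?_⟩, ?_⟩
            · intro f hf
              rcases List.mem_cons.mp hf with rfl | hf
              · exact hzβ
              · exact hz2 f hf
            · exact fun b hb => hz3 b (List.mem_cons_of_mem _ hb)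
        | psup x y =>
          obtain ⟨hx, hy⟩ := he
          have hcall := ih γ [] (x :: y :: Bx') βs d ?_ hγ (by simp) ?_ hβs hd ?_
          · rw [s8sR_cons]
            simp only [PE.val]
            rw [sup_assoc]
            simpa only [s8sR_cons] using hcall
          · simp only [List.map_cons, List.sum_cons, PE.sz] at hsz ⊢; omega
          · intro f hf
            rcases List.mem_cons.mp hf with rfl | hf
            · exact hx
            rcases List.mem_cons.mp hf with rfl | hf
            · exact hy
            · exact hBx' f hf
          · intro z hz
            apply hsub
            obtain ⟨hz1, hz2⟩ := hz
            refine ⟨hz1, ?_⟩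
            rw [s8mem_pS, s8mem_sS] at hz2 ⊢
            push_neg at hz2 ⊢
            obtain ⟨⟨-, hz2⟩, hz3⟩ := hz2
            refine ⟨⟨Set.notMem_empty z, ?_⟩, hz3⟩
            intro f hf
            rcases List.mem_cons.mp hf with rfl | hf
            · have h1 := hz2 x (List.mem_cons_self)
              have h2 := hz2 y (List.mem_cons_of_mem _ (List.mem_cons_self))
              simp only [PE.sets, Set.mem_union]
              tauto
            · exact hz2 f (List.mem_cons_of_mem _ (List.mem_cons_of_mem _ hf))
        | pinf x y =>
          obtain ⟨hx, hy⟩ := he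
          rw [s8sR_cons]
          simp only [PE.val]
          rw [s8pR_sup, sup_inf_right, sdiff_inf]
          apply sup_le
          · have hcall := ih γ [] (x :: Bx') βs d ?_ hγ (by simp) ?_ hβs hd ?_
            · rw [s8sR_cons, s8pR_sup] at hcall
              exact hcall
            · simp only [List.map_cons, List.sum_cons, PE.sz] at hsz ⊢; omega
            · intro f hf
              rcases List.mem_cons.mp hf with rfl | hf
              · exact hx
              · exact hBx' f hf
            · intro z hz
              apply hsub
              obtain ⟨hz1, hz2⟩ := hz
              refine ⟨hz1, ?_⟩
              rw [s8mem_pS, s8mem_sS] at hz2 ⊢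
              push_neg at hz2 ⊢
              obtain ⟨⟨-, hz2⟩, hz3⟩ := hz2
              refine ⟨⟨Set.notMem_empty z, ?_⟩, hz3⟩
              intro f hf
              rcases List.mem_cons.mp hf with rfl | hf
              · have h1 := hz2 x (List.mem_cons_self)
                simp only [PE.sets, Set.mem_inter_iff]
                tauto
              · exact hz2 f (List.mem_cons_of_mem _ hf)
          · have hcall := ih γ [] (y :: Bx') βs d ?_ hγ (by simp) ?_ hβs hd ?_
            · rw [s8sR_cons, s8pR_sup] at hcall
              exact hcall
            · simp only [List.map_cons, List.sum_cons, PE.sz] at hsz ⊢; omega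
            · intro f hf
              rcases List.mem_cons.mp hf with rfl | hf
              · exact hy
              · exact hBx' f hf
            · intro z hz
              apply hsub
              obtain ⟨hz1, hz2⟩ := hz
              refine ⟨hz1, ?_⟩
              rw [s8mem_pS, s8mem_sS] at hz2 ⊢
              push_neg at hz2 ⊢
              obtain ⟨⟨-, hz2⟩, hz3⟩ := hz2
              refine ⟨⟨Set.notMem_empty z, ?_⟩, hz3⟩
              intro f hf
              rcases List.mem_cons.mp hf with rfl | hf
              · have h1 := hz2 y (List.mem_cons_self)
                simp only [PE.sets, Set.mem_inter_iff]
                tauto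
              · exact hz2 f (List.mem_cons_of_mem _ hf)
        | pdiff x y =>
          obtain ⟨hx, hy⟩ := he
          rw [s8sR_cons]
          simp only [PE.val]
          rw [s8pR_sup, sup_comm]
          refine (s8I3 (μ γ) (s8pR μ (s8sR μ ⊥ Bx') βs) (x.val μ) (y.val μ)).trans
            (sup_le ?_ ?_)
          · have hcall := ih γ [] (x :: Bx') βs d ?_ hγ (by simp) ?_ hβs hd ?_
            · rw [s8sR_cons, s8pR_sup] at hcall
              rw [sup_comm]
              exact hcall
            · simp only [List.map_cons, List.sum_cons, PE.sz] at hsz ⊢; omega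
            · intro f hf
              rcases List.mem_cons.mp hf with rfl | hf
              · exact hx
              · exact hBx' f hf
            · intro z hz
              apply hsub
              obtain ⟨hz1, hz2⟩ := hz
              refine ⟨hz1, ?_⟩
              rw [s8mem_pS, s8mem_sS] at hz2 ⊢
              push_neg at hz2 ⊢
              obtain ⟨⟨-, hz2⟩, hz3⟩ := hz2
              refine ⟨⟨Set.notMem_empty z, ?_⟩, hz3⟩
              intro f hf
              rcases List.mem_cons.mp hf with rfl | hf
              · have h1 := hz2 x (List.mem_cons_self)
                simp only [PE.sets, Set.mem_diff]
                tauto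
              · exact hz2 f (List.mem_cons_of_mem _ hf)
          · have hcall := ih γ [y] Bx' βs d ?_ hγ ?_ hBx' hβs hd ?_
            · rw [inf_comm]
              simpa only [s8iR_cons, s8iR_nil] using hcall
            · simp only [List.map_cons, List.sum_cons, PE.sz, List.map_nil,
                List.sum_nil] at hsz ⊢
              have := PE.sz_pos x
              omega
            · intro f hf
              rcases List.mem_cons.mp hf with rfl | hf
              · exact hy
              · simp at hf
            · intro z hz
              apply hsub
              obtain ⟨hz1, hz2⟩ := hz
              rw [s8mem_iS] at hz1
              have hzy : z ∈ y.sets C := hz1.2 y (List.mem_cons_self)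
              refine ⟨hz1.1, ?_⟩
              rw [s8mem_pS, s8mem_sS] at hz2 ⊢
              push_neg at hz2 ⊢
              obtain ⟨⟨-, hz2⟩, hz3⟩ := hz2
              refine ⟨⟨Set.notMem_empty z, ?_⟩, hz3⟩
              intro f hf
              rcases List.mem_cons.mp hf with rfl | hf
              · simp only [PE.sets, Set.mem_diff]
                intro hcc
                exact hcc.2 hzy
              · exact hz2 f hf
      case nil =>
        simp only [s8iR_nil, s8iS_nil, s8sR_nil, s8sS_nil] at hsub ⊢
        cases d with
        | pbot =>
          simp only [PE.sets] at hsub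
          simp only [PE.val, le_bot_iff, sdiff_eq_bot_iff]
          by_cases hc : γ ∈ s8pS C ∅ βs
          · rw [s8mem_pS] at hc
            rcases hc with hc | ⟨β, hβl, hγβ⟩
            · exact absurd hc (Set.notMem_empty γ)
            · exact (hmono γ β hγ (hβs β hβl) hγβ).trans (s8le_pR μ ⊥ βs hβl)
          · exact absurd (hsub ⟨s8_mem_pTail_self C γ, hc⟩) (Set.notMem_empty γ)
        | base α =>
          simp only [PE.sets] at hsub
          simp only [PE.val]
          by_cases hc : γ ∈ s8pS C ∅ βs
          · rw [s8mem_pS] at hc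
            rcases hc with hc | ⟨β, hβl, hγβ⟩
            · exact absurd hc (Set.notMem_empty γ)
            · have h1 : μ γ ≤ s8pR μ ⊥ βs :=
                (hmono γ β hγ (hβs β hβl) hγβ).trans (s8le_pR μ ⊥ βs hβl)
              rw [sdiff_eq_bot_iff.mpr h1]
              exact bot_le
          · have hγα : γ ∈ pTail C α := hsub ⟨s8_mem_pTail_self C γ, hc⟩
            exact sdiff_le.trans (hmono γ α hγ hd hγα)
        | psup c d' =>
          obtain ⟨hcg, hdg⟩ := hd
          have hcall := ih γ [] [c] βs d' ?_ hγ (by simp) ?_ hβs hdg ?_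
          · rw [s8sR_cons, s8sR_nil, s8pR_sup] at hcall
            simp only [PE.val]
            refine (s8I4 (μ γ) (s8pR μ ⊥ βs) (c.val μ)).trans ?_
            refine sup_le ?_ le_sup_left
            rw [sup_comm (s8pR μ ⊥ βs) (PE.val μ c)]
            exact hcall.trans le_sup_right
          · simp only [List.map_cons, List.sum_cons, PE.sz, List.map_nil,
              List.sum_nil] at hsz ⊢
            omega
          · intro f hf
            rcases List.mem_cons.mp hf with rfl | hf
            · exact hcg
            · simp at hf
          · intro z hz
            obtain ⟨hz1, hz2⟩ := hz
            have hz1' : z ∈ pTail C γ := hz1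
            rw [s8mem_pS, s8mem_sS] at hz2
            push_neg at hz2
            obtain ⟨⟨-, hz2⟩, hz3⟩ := hz2
            have hznc : z ∉ c.sets C := hz2 c (List.mem_cons_self)
            have hz5 : z ∉ s8pS C ∅ βs := by
              rw [s8mem_pS]
              push_neg
              exact ⟨Set.notMem_empty z, hz3⟩
            have hzin := hsub ⟨hz1', hz5⟩
            simp only [PE.sets, Set.mem_union] at hzin
            rcases hzin with h | h
            · exact absurd h hznc
            · exact h
        | pinf c d' =>
          obtain ⟨hcg, hdg⟩ := hd
          simp only [PE.val]
          apply le_inf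
          · refine ih γ [] [] βs c ?_ hγ (by simp) (by simp) hβs hcg ?_
            · simp only [List.map_nil, List.sum_nil, PE.sz] at hsz ⊢; omega
            · exact fun z hz => (hsub hz).1
          · refine ih γ [] [] βs d' ?_ hγ (by simp) (by simp) hβs hdg ?_
            · simp only [List.map_nil, List.sum_nil, PE.sz] at hsz ⊢; omega
            · exact fun z hz => (hsub hz).2
        | pdiff c d' =>
          obtain ⟨hcg, hdg⟩ := hd
          simp only [PE.val]
          apply s8le_sdiff
          · refine ih γ [] [] βs c ?_ hγ (by simp) (by simp) hβs hcg ?_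
            · simp only [List.map_nil, List.sum_nil, PE.sz] at hsz ⊢; omega
            · exact fun z hz => (hsub hz).1
          · have hcall2 := ih γ [d'] [] βs PE.pbot ?_ hγ ?_ (by simp) hβs trivial ?_
            · have h2 : (d'.val μ ⊓ μ γ) \ s8pR μ ⊥ βs = ⊥ :=
                le_bot_iff.mp (by simpa only [s8iR_cons, s8iR_nil, s8sR_nil, PE.val]
                  using hcall2)
              rw [s8I1, inf_comm]
              exact h2
            · simp only [List.map_cons, List.sum_cons, PE.sz, List.map_nil,
                List.sum_nil] at hsz ⊢
              have := PE.sz_pos c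
              omega
            · intro f hf
              rcases List.mem_cons.mp hf with rfl | hf
              · exact hdg
              · simp at hf
            · intro z hz
              exfalso
              obtain ⟨hz1, hz2⟩ := hz
              rw [s8mem_iS] at hz1
              have hzd' : z ∈ d'.sets C := hz1.2 d' (List.mem_cons_self)
              have hzin := hsub ⟨hz1.1, hz2⟩
              exact hzin.2 hzd'

end Master

section Final

variable {R : Type v} [GeneralizedBooleanAlgebra R]

def PE.bases : PE Λ → List Λ
  | PE.base α => [α]
  | PE.pbot => []
  | PE.psup a b => a.bases ++ b.bases
  | PE.pinf a b => a.bases ++ b.bases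
  | PE.pdiff a b => a.bases ++ b.bases

theorem s8_bases_good {C : CategoryOfPaths Λ} {v : Λ} :
    ∀ {e : PE Λ}, e.Good C v → ∀ β ∈ e.bases, C.r β = v
  | PE.base α, h, β, hβ => by
      simp only [PE.bases, List.mem_singleton] at hβ
      subst hβ; exact h
  | PE.pbot, _, β, hβ => by simp [PE.bases] at hβ
  | PE.psup a b, h, β, hβ => by
      rcases List.mem_append.mp hβ with hβ | hβ
      · exact s8_bases_good h.1 β hβ
      · exact s8_bases_good h.2 β hβ
  | PE.pinf a b, h, β, hβ => by
      rcases List.mem_append.mp hβ with hβ | hβ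
      · exact s8_bases_good h.1 β hβ
      · exact s8_bases_good h.2 β hβ
  | PE.pdiff a b, h, β, hβ => by
      rcases List.mem_append.mp hβ with hβ | hβ
      · exact s8_bases_good h.1 β hβ
      · exact s8_bases_good h.2 β hβ

theorem s8pR_append (μ : Λ → R) (x : R) (l1 l2 : List Λ) :
    s8pR μ x (l1 ++ l2) = s8pR μ ⊥ l1 ⊔ s8pR μ x l2 := by
  induction l1 with
  | nil => simp
  | cons b l ih => simp [ih, sup_assoc]

theorem s8_val_le_bases (μ : Λ → R) : ∀ e : PE Λ, e.val μ ≤ s8pR μ ⊥ e.bases := by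
  intro e
  induction e with
  | base α => simp [PE.val, PE.bases]
  | pbot => simp [PE.val]
  | psup a b iha ihb =>
    show a.val μ ⊔ b.val μ ≤ _
    rw [PE.bases, s8pR_append]
    exact sup_le_sup iha ihb
  | pinf a b iha ihb =>
    show a.val μ ⊓ b.val μ ≤ _
    rw [PE.bases, s8pR_append]
    exact inf_le_left.trans (iha.trans le_sup_left)
  | pdiff a b iha ihb =>
    show a.val μ \ b.val μ ≤ _
    rw [PE.bases, s8pR_append]
    exact sdiff_le.trans (iha.trans le_sup_left)

theorem s8_val_mono (C : CategoryOfPaths Λ) (v : Λ) (μ : Λ → R)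
    (hmono : ∀ γ β : Λ, C.r γ = v → C.r β = v → γ ∈ pTail C β → μ γ ≤ μ β)
    (hkey : ∀ γ α : Λ, C.r γ = v → C.r α = v → ∃ F : Finset Λ,
      (∀ ε ∈ F, C.r ε = v ∧ ε ∈ pTail C γ ∧ ε ∈ pTail C α) ∧ μ γ ⊓ μ α = F.sup μ)
    {e e' : PE Λ} (hge : e.Good C v) (hge' : e'.Good C v)
    (hss : e.sets C ⊆ e'.sets C) : e.val μ ≤ e'.val μ := by
  have h1 : e.val μ ≤ e.val μ ⊓ s8pR μ ⊥ e.bases := le_inf le_rfl (s8_val_le_bases μ e)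
  refine h1.trans (s8inf_pR_le μ _ _ _ ?_)
  intro β hβ
  have hβv : C.r β = v := s8_bases_good hge β hβ
  have hm := s8master C v μ hmono hkey (e.sz + e'.sz) β [e] [] [] e' ?_ hβv ?_
    (by simp) (by simp) hge' ?_
  · simpa only [s8iR_cons, s8iR_nil, s8sR_nil, s8pR_nil, sdiff_bot] using hm
  · simp [PE.sz]
  · intro f hf
    rcases List.mem_cons.mp hf with rfl | hf
    · exact hge
    · simp at hf
  · intro z hz
    obtain ⟨hz1, hz2⟩ := hz
    rw [s8mem_iS] at hz1
    exact hss (hz1.2 e (List.mem_cons_self))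

theorem s8_pTail_sub_pRng {C : CategoryOfPaths Λ} {v α : Λ} (h : C.r α = v) :
    pTail C α ⊆ pRng C v := by
  intro x hx
  simp only [pRng, Set.mem_setOf_eq]
  rw [s8_r_of_mem hx, h]

theorem s8_mem_tailRing_iff {C : CategoryOfPaths Λ} {v : Λ} {E : Set Λ} :
    E ∈ tailRing C v ↔ ∀ Rr : Set (Set Λ),
      (IsSetRingOn (pRng C v) Rr ∧ {E | ∃ α, C.r α = v ∧ E = pTail C α} ⊆ Rr) →
        E ∈ Rr := by
  rw [tailRing, setRingGenOn, Set.mem_sInter]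
  simp only [Set.mem_setOf_eq]

theorem s8_tailRing_min {C : CategoryOfPaths Λ} {v : Λ} {Rr : Set (Set Λ)}
    (h1 : IsSetRingOn (pRng C v) Rr)
    (h2 : {E | ∃ α, C.r α = v ∧ E = pTail C α} ⊆ Rr) : tailRing C v ⊆ Rr :=
  fun _ hE => s8_mem_tailRing_iff.mp hE Rr ⟨h1, h2⟩

theorem s8_tailRing_empty (C : CategoryOfPaths Λ) (v : Λ) : ∅ ∈ tailRing C v := by
  rw [s8_mem_tailRing_iff]
  exact fun Rr h => h.1.1.1

theorem s8_tailRing_gen {C : CategoryOfPaths Λ} {v α : Λ} (h : C.r α = v) :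
    pTail C α ∈ tailRing C v := by
  rw [s8_mem_tailRing_iff]
  exact fun Rr hR => hR.2 ⟨α, h, rfl⟩

theorem s8_tailRing_union {C : CategoryOfPaths Λ} {v : Λ} {E F : Set Λ}
    (hE : E ∈ tailRing C v) (hF : F ∈ tailRing C v) : E ∪ F ∈ tailRing C v := by
  rw [s8_mem_tailRing_iff] at *
  exact fun Rr hR => hR.1.1.2.1 E (hE Rr hR) F (hF Rr hR)

theorem s8_tailRing_inter {C : CategoryOfPaths Λ} {v : Λ} {E F : Set Λ}
    (hE : E ∈ tailRing C v) (hF : F ∈ tailRing C v) : E ∩ F ∈ tailRing C v := by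
  rw [s8_mem_tailRing_iff] at *
  exact fun Rr hR => hR.1.1.2.2.1 E (hE Rr hR) F (hF Rr hR)

theorem s8_tailRing_sdiff {C : CategoryOfPaths Λ} {v : Λ} {E F : Set Λ}
    (hE : E ∈ tailRing C v) (hF : F ∈ tailRing C v) : E \ F ∈ tailRing C v := by
  rw [s8_mem_tailRing_iff] at *
  exact fun Rr hR => hR.1.1.2.2.2 E (hE Rr hR) F (hF Rr hR)

end Final

section KeyDerive

variable {R : Type v} [GeneralizedBooleanAlgebra R]

theorem s8_derive_mono {C : CategoryOfPaths Λ} {v : Λ} {μ : Λ → R}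
    (hμ : ∀ α β : Λ, C.r α = v → C.r β = v →
      IsLUB (insert ⊥ (μ '' pMinCE C α β)) (μ α ⊓ μ β)) :
    ∀ γ β : Λ, C.r γ = v → C.r β = v → γ ∈ pTail C β → μ γ ≤ μ β := by
  intro γ β h1 h2 h3
  have hl := hμ γ β h1 h2
  have hm : μ γ ∈ insert ⊥ (μ '' pMinCE C γ β) :=
    Set.mem_insert_iff.mpr (Or.inr ⟨γ, s8_self_mem_pMinCE h3, rfl⟩)
  exact (hl.1 hm).trans inf_le_right

theorem s8_derive_key {C : CategoryOfPaths Λ} {v : Λ} {μ : Λ → R}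
    (hfa : FinitelyAligned C)
    (hμ : ∀ α β : Λ, C.r α = v → C.r β = v →
      IsLUB (insert ⊥ (μ '' pMinCE C α β)) (μ α ⊓ μ β)) :
    ∀ γ α : Λ, C.r γ = v → C.r α = v → ∃ F : Finset Λ,
      (∀ ε ∈ F, C.r ε = v ∧ ε ∈ pTail C γ ∧ ε ∈ pTail C α) ∧ μ γ ⊓ μ α = F.sup μ := by
  intro γ α h1 h2
  obtain ⟨hfin, -⟩ := s8_pMinCE_spec hfa γ α
  classical
  refine ⟨hfin.toFinset, ?_, ?_⟩
  · intro ε hε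
    rw [Set.Finite.mem_toFinset] at hε
    have h := (s8_mem_pMinCE.mp hε).1
    exact ⟨by rw [s8_r_of_mem h.1, h1], h.1, h.2⟩
  · apply le_antisymm
    · refine (hμ γ α h1 h2).2 ?_
      intro x hx
      rcases Set.mem_insert_iff.mp hx with rfl | ⟨ε, hε, rfl⟩
      · exact bot_le
      · exact Finset.le_sup (hfin.mem_toFinset.mpr hε)
    · apply Finset.sup_le
      intro ε hε
      exact (hμ γ α h1 h2).1
        (Set.mem_insert_iff.mpr (Or.inr ⟨ε, hfin.mem_toFinset.mp hε, rfl⟩))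

end KeyDerive

end Statement8Aux

/-- Theorem 5.9. For a finitely aligned category of paths, a
map `μ : vΛ → R` extends (uniquely) to a Boolean ring homomorphism
`𝒜_v → R` with `μ̄(αΛ) = μ(α)` iff `μ(α) ⊓ μ(β) = ⨆_{ε ∈ α∨β} μ(ε)` for all
`α, β ∈ vΛ`. -/
theorem statement8 {Λ : Type u} (C : CategoryOfPaths Λ) (hfa : FinitelyAligned C)
    (v : Λ) (hv : C.r v = v) {R : Type*} [GeneralizedBooleanAlgebra R] (μ : Λ → R) :
    ((∃ ν : Set Λ → R, IsBRHomOn (tailRing C v) ν ∧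
        ∀ α : Λ, C.r α = v → ν (pTail C α) = μ α) ↔
      (∀ α β : Λ, C.r α = v → C.r β = v →
        IsLUB (insert ⊥ (μ '' pMinCE C α β)) (μ α ⊓ μ β))) ∧
    (∀ ν₁ ν₂ : Set Λ → R, IsBRHomOn (tailRing C v) ν₁ → IsBRHomOn (tailRing C v) ν₂ →
      (∀ α : Λ, C.r α = v → ν₁ (pTail C α) = μ α) →
      (∀ α : Λ, C.r α = v → ν₂ (pTail C α) = μ α) →
      ∀ E ∈ tailRing C v, ν₁ E = ν₂ E) := by
  classical
  constructor
  · constructor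
    · -- forward direction
      rintro ⟨ν, hν, hgen⟩ α β hα hβ
      obtain ⟨hfin, hcov⟩ := s8_pMinCE_spec hfa α β
      have hUnion : ∀ F : Finset Λ, (∀ ε ∈ F, C.r ε = v) →
          (⋃ ε ∈ F, pTail C ε) ∈ tailRing C v ∧
            ν (⋃ ε ∈ F, pTail C ε) = F.sup μ := by
        intro F
        induction F using Finset.induction_on with
        | empty =>
          intro _
          have he : (⋃ ε ∈ (∅ : Finset Λ), pTail C ε) = ∅ := by simp
          rw [he, Finset.sup_empty]
          exact ⟨s8_tailRing_empty C v, hν.1⟩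
        | insert _ _ ha ih =>
          rename_i a F
          intro hall
          have h1 := ih fun ε hε => hall ε (Finset.mem_insert_of_mem hε)
          have hga : pTail C a ∈ tailRing C v :=
            s8_tailRing_gen (hall a (Finset.mem_insert_self a F))
          rw [Finset.set_biUnion_insert]
          refine ⟨s8_tailRing_union hga h1.1, ?_⟩
          rw [hν.2.1 _ hga _ h1.1, h1.2, hgen a (hall a (Finset.mem_insert_self a F)),
            Finset.sup_insert]
      have hall : ∀ ε ∈ hfin.toFinset, C.r ε = v := by
        intro ε hε
        rw [Set.Finite.mem_toFinset] at hε
        have h := (s8_mem_pMinCE.mp hε).1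
        rw [s8_r_of_mem h.1, hα]
      have e0 : μ α ⊓ μ β = hfin.toFinset.sup μ := by
        have hgα : pTail C α ∈ tailRing C v := s8_tailRing_gen hα
        have hgβ : pTail C β ∈ tailRing C v := s8_tailRing_gen hβ
        calc μ α ⊓ μ β = ν (pTail C α) ⊓ ν (pTail C β) := by
              rw [hgen α hα, hgen β hβ]
          _ = ν (pTail C α ∩ pTail C β) := (hν.2.2.1 _ hgα _ hgβ).symm
          _ = ν (⋃ ε ∈ hfin.toFinset, pTail C ε) := by
              rw [hcov, ← Finset.set_biUnion_coe, Set.Finite.coe_toFinset]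
          _ = hfin.toFinset.sup μ := (hUnion _ hall).2
      rw [e0]
      constructor
      · intro x hx
        rcases Set.mem_insert_iff.mp hx with rfl | ⟨ε, hε, rfl⟩
        · exact bot_le
        · exact Finset.le_sup (hfin.mem_toFinset.mpr hε)
      · intro b hb
        apply Finset.sup_le
        intro ε hε
        exact hb (Set.mem_insert_iff.mpr (Or.inr ⟨ε, hfin.mem_toFinset.mp hε, rfl⟩))
    · -- backward direction
      intro hμ
      have hmono := s8_derive_mono hμ
      have hkey := s8_derive_key hfa hμ
      have hExi : ∀ E ∈ tailRing C v, ∃ e : PE Λ, e.Good C v ∧ e.sets C = E := by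
        apply s8_tailRing_min
        · refine ⟨⟨⟨PE.pbot, trivial, rfl⟩, ?_, ?_, ?_⟩, ?_⟩
          · rintro E ⟨e, hg, rfl⟩ F ⟨f, hg', rfl⟩
            exact ⟨PE.psup e f, ⟨hg, hg'⟩, rfl⟩
          · rintro E ⟨e, hg, rfl⟩ F ⟨f, hg', rfl⟩
            exact ⟨PE.pinf e f, ⟨hg, hg'⟩, rfl⟩
          · rintro E ⟨e, hg, rfl⟩ F ⟨f, hg', rfl⟩
            exact ⟨PE.pdiff e f, ⟨hg, hg'⟩, rfl⟩
          · rintro E ⟨e, hg, rfl⟩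
            exact PE.good_sets_subset hg
        · rintro E ⟨α, hα, rfl⟩
          exact ⟨PE.base α, hα, rfl⟩
      set ν : Set Λ → R := fun E =>
        if h : ∃ e : PE Λ, e.Good C v ∧ e.sets C = E then h.choose.val μ else ⊥ with hνdef
      have hν_eq : ∀ e : PE Λ, e.Good C v → ν (e.sets C) = e.val μ := by
        intro e hg
        have hex : ∃ f : PE Λ, f.Good C v ∧ f.sets C = e.sets C := ⟨e, hg, rfl⟩
        have : ν (e.sets C) = hex.choose.val μ := by
          rw [hνdef]; exact dif_pos hex
        rw [this]
        obtain ⟨hg', hs'⟩ := hex.choose_spec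
        exact le_antisymm
          (s8_val_mono C v μ hmono hkey hg' hg (le_of_eq hs'))
          (s8_val_mono C v μ hmono hkey hg hg' (le_of_eq hs'.symm))
      refine ⟨ν, ⟨?_, ?_, ?_, ?_⟩, ?_⟩
      · have h := hν_eq PE.pbot trivial
        simpa [PE.sets, PE.val] using h
      · intro E hE F hF
        obtain ⟨e, hge, rfl⟩ := hExi E hE
        obtain ⟨f, hgf, rfl⟩ := hExi F hF
        have h2 : ν (e.sets C ∪ f.sets C) = (PE.psup e f).val μ :=
          hν_eq (PE.psup e f) ⟨hge, hgf⟩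
        rw [h2, hν_eq e hge, hν_eq f hgf]
        rfl
      · intro E hE F hF
        obtain ⟨e, hge, rfl⟩ := hExi E hE
        obtain ⟨f, hgf, rfl⟩ := hExi F hF
        have h2 : ν (e.sets C ∩ f.sets C) = (PE.pinf e f).val μ :=
          hν_eq (PE.pinf e f) ⟨hge, hgf⟩
        rw [h2, hν_eq e hge, hν_eq f hgf]
        rfl
      · intro E hE F hF
        obtain ⟨e, hge, rfl⟩ := hExi E hE
        obtain ⟨f, hgf, rfl⟩ := hExi F hF
        have h2 : ν (e.sets C \ f.sets C) = (PE.pdiff e f).val μ :=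
          hν_eq (PE.pdiff e f) ⟨hge, hgf⟩
        rw [h2, hν_eq e hge, hν_eq f hgf]
        rfl
      · intro α hα
        exact hν_eq (PE.base α) hα
  · -- uniqueness
    intro ν₁ ν₂ h1 h2 hg1 hg2 E hE
    have hsub : tailRing C v ⊆ {E | E ∈ tailRing C v ∧ ν₁ E = ν₂ E} := by
      apply s8_tailRing_min
      · refine ⟨⟨⟨s8_tailRing_empty C v, by rw [h1.1, h2.1]⟩, ?_, ?_, ?_⟩, ?_⟩
        · rintro E ⟨hE1, hE2⟩ F ⟨hF1, hF2⟩
          exact ⟨s8_tailRing_union hE1 hF1,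
            by rw [h1.2.1 E hE1 F hF1, h2.2.1 E hE1 F hF1, hE2, hF2]⟩
        · rintro E ⟨hE1, hE2⟩ F ⟨hF1, hF2⟩
          exact ⟨s8_tailRing_inter hE1 hF1,
            by rw [h1.2.2.1 E hE1 F hF1, h2.2.2.1 E hE1 F hF1, hE2, hF2]⟩
        · rintro E ⟨hE1, hE2⟩ F ⟨hF1, hF2⟩
          exact ⟨s8_tailRing_sdiff hE1 hF1,
            by rw [h1.2.2.2 E hE1 F hF1, h2.2.2.2 E hE1 F hF1, hE2, hF2]⟩
        · rintro E ⟨hE1, -⟩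
          exact s8_mem_tailRing_iff.mp hE1 {E | E ⊆ pRng C v}
            ⟨⟨⟨Set.empty_subset _,
               fun E hE F hF => Set.union_subset hE hF,
               fun E hE F _ => (Set.inter_subset_left).trans hE,
               fun E hE F _ => (Set.diff_subset).trans hE⟩,
              fun E hE => hE⟩,
             by rintro E ⟨α, hα, rfl⟩; exact s8_pTail_sub_pRng hα⟩
      · rintro E ⟨α, hα, rfl⟩
        exact ⟨s8_tailRing_gen hα, by rw [hg1 α hα, hg2 α hα]⟩
    exact (hsub hE).2
end

section
/- Let Λ be a finitely aligned category of paths. Let α, α' ∈ Λ, x ∈ s(α)Λ*, and x' ∈ s(α')Λ* with αx = α'x'. Then there exist δ ∈ s(α)Λ, δ' ∈ s(α')Λ, and z ∈ s(δ)Λ* such that x = δz, x' = δ'z, and αδ = α'δ'; moreover δ and δ' may be chosen so that αδ ∈ α ∨ α'. -/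
universe u v

variable {Λ : Type u}

section Statement9Aux

variable {Λ : Type u} (C : CategoryOfPaths Λ)

lemma mem_pTail_self (α : Λ) : α ∈ pTail C α :=
  ⟨C.s α, (C.r_s α).symm, (C.comp_id α).symm⟩

lemma pTail_trans {a b c : Λ} (hab : b ∈ pTail C a) (hbc : c ∈ pTail C b) :
    c ∈ pTail C a := by
  obtain ⟨β, h1, rfl⟩ := hab
  obtain ⟨γ, h2, rfl⟩ := hbc
  have hs : C.s β = C.r γ := (C.s_comp h1).symm.trans h2
  refine ⟨C.comp β γ, ?_, ?_⟩
  · rw [C.r_comp hs]; exact h1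
  · rw [C.comp_assoc h1 hs]

lemma pTail_antisymm {a b : Λ} (hab : b ∈ pTail C a) (hba : a ∈ pTail C b) :
    a = b := by
  obtain ⟨β, h1, rfl⟩ := hab
  obtain ⟨γ, h2, h3⟩ := hba
  have hs : C.s β = C.r γ := (C.s_comp h1).symm.trans h2
  have h4 : C.comp a (C.comp β γ) = C.comp a (C.s a) := by
    rw [C.comp_id, ← C.comp_assoc h1 hs, ← h3]
  have h5 : C.comp β γ = C.s a := by
    refine C.left_cancel ?_ ?_ h4
    · rw [C.r_comp hs]; exact h1
    · rw [C.r_s]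
  have h6 : C.s a = C.s γ := by
    have := C.s_comp hs
    rw [h5, C.s_s] at this
    exact this
  have h7 : C.comp β γ = C.s γ := h5.trans h6
  obtain ⟨h8, _⟩ := C.no_inverses hs h7
  rw [h8, ← h6, C.comp_id]

lemma pTail_comp_cancel {a β γ : Λ} (hβ : C.s a = C.r β) (hγ : C.s a = C.r γ)
    (hmem : C.comp a γ ∈ pTail C (C.comp a β)) : γ ∈ pTail C β := by
  obtain ⟨β₂, h1, h2⟩ := hmem
  have hs : C.s β = C.r β₂ := (C.s_comp hβ).symm.trans h1
  have h3 : C.comp a γ = C.comp a (C.comp β β₂) := by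
    rw [h2, C.comp_assoc hβ hs]
  have h4 : γ = C.comp β β₂ := by
    refine C.left_cancel hγ ?_ h3
    rw [C.r_comp hs]; exact hβ
  exact ⟨β₂, hs, h4⟩

lemma comp_mem_mulStar {x : Set Λ} {a β : Λ} (hβ : C.s a = C.r β) (hx : β ∈ x) :
    C.comp a β ∈ pMulStar C a x :=
  ⟨β, hx, hβ, mem_pTail_self C _⟩

lemma mem_of_comp_mem_mulStar {x : Set Λ} (hher : pHereditary C x) {a β : Λ}
    (hβ : C.s a = C.r β) (hmem : C.comp a β ∈ pMulStar C a x) : β ∈ x := by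
  obtain ⟨γ, hγx, hγr, hm⟩ := hmem
  exact hher γ hγx β (pTail_comp_cancel C hβ hγr hm)

lemma shift_mem_lamStar {x : Set Λ} (hdir : pDirected C x) (hher : pHereditary C x)
    {δ : Λ} (hδ : δ ∈ x) : pShift C δ x ∈ lamStar C (C.s δ) := by
  refine ⟨⟨C.s δ, (C.r_s δ).symm, by rw [C.comp_id]; exact hδ⟩, ?_, ?_, ?_⟩
  · rintro γ ⟨h1, _⟩
    exact h1.symm
  · rintro γ₁ ⟨hr1, hm1⟩ γ₂ ⟨hr2, hm2⟩
    obtain ⟨ζ, ⟨hζ1, hζ2⟩, hζx⟩ := hdir _ hm1 _ hm2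
    obtain ⟨β, hb, rfl⟩ := hζ1
    have hsb : C.s γ₁ = C.r β := (C.s_comp hr1).symm.trans hb
    have hδη : C.comp δ (C.comp γ₁ β) = C.comp (C.comp δ γ₁) β :=
      (C.comp_assoc hr1 hsb).symm
    have hrη : C.s δ = C.r (C.comp γ₁ β) := by rw [C.r_comp hsb]; exact hr1
    refine ⟨C.comp γ₁ β, ⟨⟨⟨β, hsb, rfl⟩, ?_⟩, hrη, ?_⟩⟩
    · exact pTail_comp_cancel C hr2 hrη (by rw [hδη]; exact hζ2)
    · rw [hδη]; exact hζx
  · rintro γ ⟨hr, hm⟩ a ⟨β, hb, rfl⟩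
    have hra : C.s δ = C.r a := by rw [← C.r_comp hb]; exact hr
    refine ⟨hra, ?_⟩
    refine hher _ hm _ ⟨β, ?_, ?_⟩
    · rw [C.s_comp hra]; exact hb
    · rw [C.comp_assoc hra hb]

lemma mulStar_shift_eq {x : Set Λ} (hdir : pDirected C x) (hher : pHereditary C x)
    {δ : Λ} (hδ : δ ∈ x) : x = pMulStar C δ (pShift C δ x) := by
  ext η
  constructor
  · intro hη
    obtain ⟨ζ, ⟨hζη, hζδ⟩, hζx⟩ := hdir η hη δ hδ
    obtain ⟨β, hb, rfl⟩ := hζδ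
    exact ⟨β, ⟨hb, hζx⟩, hb, hζη⟩
  · rintro ⟨γ, ⟨hγr, hγx⟩, _, hmem⟩
    exact hher _ hγx η hmem

lemma exists_minimal_of_finite {Λ' : Type u} (C' : CategoryOfPaths Λ')
    {G : Set Λ'} (hG : G.Finite) :
    G.Nonempty → ∃ g ∈ G, ∀ g' ∈ G, g ∈ pTail C' g' → g' = g := by
  refine Set.Finite.induction_on G hG (by simp) ?_
  rintro a s _ _ ih -
  by_cases hsne : s.Nonempty
  · obtain ⟨m, hm, hmin⟩ := ih hsne
    by_cases ham : m ∈ pTail C' a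
    · refine ⟨a, Set.mem_insert _ _, ?_⟩
      rintro g' (rfl | hg's) hg'a
      · rfl
      · have h1 : g' = m := hmin g' hg's (pTail_trans C' hg'a ham)
        have h2 : a = m := pTail_antisymm C' ham (h1 ▸ hg'a)
        exact h1.trans h2.symm
    · refine ⟨m, Set.mem_insert_of_mem _ hm, ?_⟩
      rintro g' (rfl | hg's) hg'm
      · exact absurd hg'm ham
      · exact hmin g' hg's hg'm
  · rw [Set.not_nonempty_iff_eq_empty] at hsne
    subst hsne
    refine ⟨a, Set.mem_insert _ _, ?_⟩
    rintro g' (rfl | hg') _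
    · rfl
    · exact absurd hg' (Set.notMem_empty _)

end Statement9Aux

/-- Lemma 6.1, common tails. If `αx = α'x'` for
`x ∈ s(α)Λ*`, `x' ∈ s(α')Λ*`, then there are `δ, δ'` and a common tail `z`
with `x = δz`, `x' = δ'z`, `αδ = α'δ'`, and moreover `αδ ∈ α ∨ α'`. -/
theorem statement9 {Λ : Type u} (C : CategoryOfPaths Λ) (hfa : FinitelyAligned C)
    (α α' : Λ) (x x' : Set Λ)
    (hx : x ∈ lamStar C (C.s α)) (hx' : x' ∈ lamStar C (C.s α'))
    (h : pMulStar C α x = pMulStar C α' x') :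
    ∃ (δ δ' : Λ) (z : Set Λ),
      C.s α = C.r δ ∧ C.s α' = C.r δ' ∧ z ∈ lamStar C (C.s δ) ∧
      x = pMulStar C δ z ∧ x' = pMulStar C δ' z ∧
      C.comp α δ = C.comp α' δ' ∧ C.comp α δ ∈ pMinCE C α α' := by
  obtain ⟨hxne, hxrng, hxdir, hxher⟩ := hx
  obtain ⟨hxne', hxrng', hxdir', hxher'⟩ := hx'
  -- `α'` belongs to `αx = α'x'`
  have hα'mem : α' ∈ pMulStar C α x := by
    rw [h]
    obtain ⟨γ0, hγ0⟩ := hxne'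
    exact ⟨γ0, hγ0, (hxrng' hγ0).symm, ⟨γ0, (hxrng' hγ0).symm, rfl⟩⟩
  obtain ⟨γ', hγ'x, hγ'r, hγ'mem⟩ := hα'mem
  -- `ε := αγ'` is a common extension of `α` and `α'`
  have hεα : C.comp α γ' ∈ pTail C α := ⟨γ', hγ'r, rfl⟩
  have hεα' : C.comp α γ' ∈ pTail C α' := hγ'mem
  obtain ⟨G, hGfin, hGeq⟩ := hfa α α'
  have hεG : ∃ g ∈ G, C.comp α γ' ∈ pTail C g := by
    have hmem : C.comp α γ' ∈ ⋃ g ∈ G, pTail C g := hGeq ▸ ⟨hεα, hεα'⟩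
    simpa using hmem
  -- find a minimal common extension `μ` below `ε`
  have hG'fin : {g ∈ G | C.comp α γ' ∈ pTail C g}.Finite :=
    hGfin.subset (Set.sep_subset _ _)
  have hG'ne : {g ∈ G | C.comp α γ' ∈ pTail C g}.Nonempty := by
    obtain ⟨g, hg, hg'⟩ := hεG
    exact ⟨g, hg, hg'⟩
  obtain ⟨μ, ⟨hμG, hμε⟩, hμmin⟩ := exists_minimal_of_finite C hG'fin hG'ne
  have hsubG : ∀ g ∈ G, g ∈ pTail C α ∩ pTail C α' := by
    intro g hg
    rw [hGeq]
    exact Set.mem_biUnion hg (mem_pTail_self C g)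
  have hμint : μ ∈ pTail C α ∩ pTail C α' := hsubG μ hμG
  -- `μ` is a minimal common extension
  have hμmin' : μ ∈ pMinCE C α α' := by
    constructor
    · rintro a (rfl | ha)
      · exact hμint.1
      · rw [Set.mem_singleton_iff] at ha
        subst ha
        exact hμint.2
    · intro γ hγ hμγ
      have hγα : γ ∈ pTail C α := hγ α (Set.mem_insert _ _)
      have hγα' : γ ∈ pTail C α' := hγ α' (Set.mem_insert_of_mem _ rfl)
      have hγU : γ ∈ ⋃ g ∈ G, pTail C g := hGeq ▸ ⟨hγα, hγα'⟩
      obtain ⟨g'', hg''G, hγg''⟩ := by simpa using hγU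
      have hεγ : C.comp α γ' ∈ pTail C γ := pTail_trans C hμγ hμε
      have hεg'' : C.comp α γ' ∈ pTail C g'' := pTail_trans C hγg'' hεγ
      have hμg'' : μ ∈ pTail C g'' := pTail_trans C hγg'' hμγ
      have hg''μ : g'' = μ := hμmin g'' ⟨hg''G, hεg''⟩ hμg''
      exact pTail_antisymm C hμγ (hg''μ ▸ hγg'')
  obtain ⟨δ, hδr, hμδ⟩ := hμint.1
  obtain ⟨δ', hδ'r, hμδ'⟩ := hμint.2
  have hcomp : C.comp α δ = C.comp α' δ' := hμδ.symm.trans hμδ'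
  -- `δ ∈ x` and `δ' ∈ x'`
  have hδx : δ ∈ x := hxher γ' hγ'x δ (pTail_comp_cancel C hδr hγ'r (hμδ ▸ hμε))
  have hμax : μ ∈ pMulStar C α x := ⟨γ', hγ'x, hγ'r, hμε⟩
  have hμax' : μ ∈ pMulStar C α' x' := h ▸ hμax
  obtain ⟨γ'', hγ''x, hγ''r, hγ''mem⟩ := hμax'
  have hδ'x : δ' ∈ x' :=
    hxher' γ'' hγ''x δ' (pTail_comp_cancel C hδ'r hγ''r (hμδ' ▸ hγ''mem))
  -- the common tail `z`
  have hz : pShift C δ x ∈ lamStar C (C.s δ) := shift_mem_lamStar C hxdir hxher hδx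
  have hxz : x = pMulStar C δ (pShift C δ x) := mulStar_shift_eq C hxdir hxher hδx
  have hss : C.s δ = C.s δ' := by
    have h1 : C.s (C.comp α δ) = C.s δ := C.s_comp hδr
    have h2 : C.s (C.comp α' δ') = C.s δ' := C.s_comp hδ'r
    rw [← h1, ← h2, hcomp]
  have hzz : pShift C δ x = pShift C δ' x' := by
    ext γ
    constructor
    · rintro ⟨hrγ, hmem⟩
      have hrγ' : C.s δ' = C.r γ := hss ▸ hrγ
      refine ⟨hrγ', ?_⟩
      have hαr : C.s α = C.r (C.comp δ γ) := by rw [C.r_comp hrγ]; exact hδr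
      have h1 : C.comp α (C.comp δ γ) ∈ pMulStar C α x := comp_mem_mulStar C hαr hmem
      have h2 : C.comp α (C.comp δ γ) = C.comp α' (C.comp δ' γ) := by
        rw [← C.comp_assoc hδr hrγ, ← C.comp_assoc hδ'r hrγ', hcomp]
      rw [h, h2] at h1
      have hαr' : C.s α' = C.r (C.comp δ' γ) := by rw [C.r_comp hrγ']; exact hδ'r
      exact mem_of_comp_mem_mulStar C hxher' hαr' h1
    · rintro ⟨hrγ', hmem⟩
      have hrγ : C.s δ = C.r γ := hss.symm ▸ hrγ'
      refine ⟨hrγ, ?_⟩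
      have hαr' : C.s α' = C.r (C.comp δ' γ) := by rw [C.r_comp hrγ']; exact hδ'r
      have h1 : C.comp α' (C.comp δ' γ) ∈ pMulStar C α' x' :=
        comp_mem_mulStar C hαr' hmem
      have h2 : C.comp α' (C.comp δ' γ) = C.comp α (C.comp δ γ) := by
        rw [← C.comp_assoc hδr hrγ, ← C.comp_assoc hδ'r hrγ', hcomp]
      rw [← h, h2] at h1
      have hαr : C.s α = C.r (C.comp δ γ) := by rw [C.r_comp hrγ]; exact hδr
      exact mem_of_comp_mem_mulStar C hxher hαr h1
  have hxz' : x' = pMulStar C δ' (pShift C δ x) := by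
    rw [hzz]
    exact mulStar_shift_eq C hxdir' hxher' hδ'x
  exact ⟨δ, δ', pShift C δ x, hδr, hδ'r, hz, hxz, hxz', hcomp, hμδ ▸ hμmin'⟩
end
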